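/- arXiv:2201.05431 — 5 statements merged into one kernel-verified Lean document; each statement's English description precedes it below -/
import Mathlib

section
/- Let ι be a finite type and let A : ℝ → Matrix ι ι ℝ be continuous such that for every t: A(t)_{ij} ≥ 0 for all i ≠ j and ∑_i A(t)_{ij} = 0 for every j. Let t₀ ∈ ℝ and let π : ℝ → (ι → ℝ) solve π'(t) = A(t) π(t) for t ≥ t₀ with π(t₀) entrywise nonnegative. Let S ⊆ ι, let Â(t) be the submatrix of A(t) with rows and columns restricted to S, and let π̂ : ℝ → (S → ℝ) solve π̂'(t) = Â(t) π̂(t) for t ≥ t₀ with π̂(t₀) equal to the restriction of π(t₀) to S. Then for all t ≥ t₀ and all i ∈ S: 0 ≤ π̂_i(t) ≤ π_i(t). -/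
open Matrix Finset

/-- Key lemma: for a Metzler-type matrix `M` (nonnegative off-diagonal entries) and a
nonnegative forcing term `f`, solutions of `y' = M y + f` with nonnegative initial
condition stay nonnegative. -/
lemma cme_metzler_nonneg
    {ι : Type*} [Fintype ι] [DecidableEq ι]
    (M : ℝ → Matrix ι ι ℝ) (hM : Continuous M)
    (hoff : ∀ (t : ℝ) (i j : ι), i ≠ j → 0 ≤ M t i j)
    (t₀ : ℝ) (f : ℝ → ι → ℝ) (hf : ∀ t : ℝ, t₀ ≤ t → ∀ i, 0 ≤ f t i)
    (y : ℝ → ι → ℝ)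
    (hy : ∀ t : ℝ, t₀ ≤ t → HasDerivWithinAt y (M t *ᵥ y t + f t) (Set.Ici t₀) t)
    (hy0 : ∀ i, 0 ≤ y t₀ i) :
    ∀ t : ℝ, t₀ ≤ t → ∀ i, 0 ≤ y t i := by
  intro t₁ ht₁ i₀
  -- continuity of y on [t₀, t₁]
  have hyc : ContinuousOn y (Set.Icc t₀ t₁) := fun t ht =>
    ((hy t ht.1).continuousWithinAt).mono (fun u hu => hu.1)
  have hyci : ∀ i, ContinuousOn (fun t => y t i) (Set.Icc t₀ t₁) := fun i =>
    (continuous_apply i).comp_continuousOn hyc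
  -- bound on row sums
  have hgc : ContinuousOn (fun t => ∑ j, |∑ k, M t j k|) (Set.Icc t₀ t₁) :=
    (continuous_finset_sum _ fun j _ =>
      (continuous_finset_sum _ fun k _ => hM.matrix_elem j k).abs).continuousOn
  obtain ⟨C, hC⟩ := (isCompact_Icc (a := t₀) (b := t₁)).exists_bound_of_continuousOn hgc
  have hCbound : ∀ t ∈ Set.Icc t₀ t₁, ∀ i : ι, ∑ k, M t i k ≤ C := by
    intro t ht i
    calc ∑ k, M t i k ≤ |∑ k, M t i k| := le_abs_self _
      _ ≤ ∑ j, |∑ k, M t j k| :=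
          Finset.single_le_sum (f := fun j => |∑ k, M t j k|) (fun j _ => abs_nonneg _)
            (Finset.mem_univ i)
      _ ≤ ‖∑ j, |∑ k, M t j k|‖ := le_abs_self _
      _ ≤ C := hC t ht
  set K : ℝ := C + 1 with hKdef
  -- main claim with ε-shift
  have claim : ∀ ε : ℝ, 0 < ε → ∀ t ∈ Set.Icc t₀ t₁, ∀ i : ι,
      0 < y t i + ε * Real.exp (K * (t - t₀)) := by
    intro ε hε
    by_contra hcon
    push_neg at hcon
    obtain ⟨tb, htb, ib, hib⟩ := hcon
    set z : ℝ → ι → ℝ := fun t i => y t i + ε * Real.exp (K * (t - t₀)) with hzdef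
    set E : Set ℝ :=
      ⋃ i : ι, (Set.Icc t₀ t₁ ∩ (fun t => z t i) ⁻¹' Set.Iic 0) with hEdef
    have hEsub : E ⊆ Set.Icc t₀ t₁ := by
      intro t ht
      obtain ⟨i, h1, _⟩ := Set.mem_iUnion.1 ht
      exact h1
    have hecont : Continuous (fun t : ℝ => ε * Real.exp (K * (t - t₀))) := by
      continuity
    have hzcont : ∀ i, ContinuousOn (fun t => z t i) (Set.Icc t₀ t₁) := fun i =>
      (hyci i).add hecont.continuousOn
    have hEclosed : IsClosed E := by
      refine isClosed_iUnion_of_finite fun i => ?_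
      exact (hzcont i).preimage_isClosed_of_isClosed isClosed_Icc isClosed_Iic
    have hEne : E.Nonempty := ⟨tb, Set.mem_iUnion.2 ⟨ib, htb, hib⟩⟩
    have hEbdd : BddBelow E := ⟨t₀, fun t ht => (hEsub ht).1⟩
    set τ := sInf E with hτdef
    have hτE : τ ∈ E := hEclosed.csInf_mem hEne hEbdd
    obtain ⟨i, hmem⟩ := Set.mem_iUnion.1 hτE
    have hiIcc : τ ∈ Set.Icc t₀ t₁ := hmem.1
    have hiz : z τ i ≤ 0 := hmem.2
    have hz0 : ∀ j, 0 < z t₀ j := by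
      intro j
      simp only [hzdef, sub_self, mul_zero, Real.exp_zero, mul_one]
      linarith [hy0 j]
    have ht₀τ : t₀ < τ := by
      rcases lt_or_eq_of_le hiIcc.1 with h | h
      · exact h
      · exact absurd hiz (not_le.2 (h ▸ hz0 i))
    have hpos : ∀ t ∈ Set.Ico t₀ τ, ∀ j, 0 < z t j := by
      intro t ht j
      by_contra hle
      push_neg at hle
      have htE : t ∈ E :=
        Set.mem_iUnion.2 ⟨j, ⟨⟨ht.1, le_trans ht.2.le hiIcc.2⟩, hle⟩⟩
      exact absurd (csInf_le hEbdd htE) (not_le.2 ht.2)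
    haveI : (nhdsWithin τ (Set.Ico t₀ τ)).NeBot := right_nhdsWithin_Ico_neBot ht₀τ
    have hzτ : ∀ j, 0 ≤ z τ j := by
      intro j
      have hcont : Filter.Tendsto (fun t => z t j) (nhdsWithin τ (Set.Ico t₀ τ))
          (nhds (z τ j)) := by
        have h1 : ContinuousWithinAt (fun t => z t j) (Set.Icc t₀ t₁) τ :=
          (hzcont j).continuousWithinAt hiIcc
        exact (h1.mono (fun u hu => ⟨hu.1, le_trans hu.2.le hiIcc.2⟩))
      refine ge_of_tendsto hcont ?_
      filter_upwards [self_mem_nhdsWithin] with t ht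
      exact (hpos t ht j).le
    have hzτi : z τ i = 0 := le_antisymm hiz (hzτ i)
    -- derivative of z_i at τ
    set e : ℝ := Real.exp (K * (τ - t₀)) with hedef
    have hepos : 0 < e := Real.exp_pos _
    set D : ℝ := (M τ *ᵥ y τ + f τ) i + ε * (e * K) with hDdef
    have hDz : HasDerivWithinAt (fun t => z t i) D (Set.Icc t₀ τ) τ := by
      have h1 : HasDerivWithinAt (fun t => y t i) ((M τ *ᵥ y τ + f τ) i)
          (Set.Ici t₀) τ := (hasDerivWithinAt_pi.1 (hy τ hiIcc.1)) i
      have h2 : HasDerivAt (fun t : ℝ => ε * Real.exp (K * (t - t₀)))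
          (ε * (e * K)) τ := by
        have h3 : HasDerivAt (fun t : ℝ => K * (t - t₀)) K τ := by
          simpa using ((hasDerivAt_id τ).sub_const t₀).const_mul K
        simpa [hedef] using (h3.exp).const_mul ε
      exact ((h1.add h2.hasDerivWithinAt).mono Set.Icc_subset_Ici_self)
    -- D ≤ 0 from minimality at τ
    have hD0 : D ≤ 0 := by
      have hslope := hasDerivWithinAt_iff_tendsto_slope.1 hDz
      rw [Set.Icc_sdiff_right] at hslope
      refine le_of_tendsto hslope ?_
      filter_upwards [self_mem_nhdsWithin] with t ht
      have h1 : slope (fun t => z t i) τ t = (z t i - z τ i) / (t - τ) := by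
        simp [slope_def_field]
      rw [h1, hzτi, sub_zero]
      rw [div_nonpos_iff]
      left
      exact ⟨(hpos t ht i).le, sub_nonpos.2 ht.2.le⟩
    -- D > 0 from the structure of the equation
    have hyz : ∀ j, y τ j = z τ j - ε * e := by
      intro j; simp [hzdef, hedef]
    have hsum1 : 0 ≤ ∑ j, M τ i j * z τ j := by
      rw [← Finset.add_sum_erase _ _ (Finset.mem_univ i), hzτi, mul_zero, zero_add]
      refine Finset.sum_nonneg fun j hj => ?_
      exact mul_nonneg (hoff τ i j (Finset.ne_of_mem_erase hj).symm) (hzτ j)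
    have hsum2 : ∑ j, M τ i j ≤ C := hCbound τ hiIcc i
    have hmv : (M τ *ᵥ y τ) i = ∑ j, M τ i j * z τ j - (∑ j, M τ i j) * (ε * e) := by
      simp only [Matrix.mulVec, dotProduct]
      simp only [hyz, mul_sub, Finset.sum_sub_distrib, Finset.sum_mul]
    have hfτ : 0 ≤ f τ i := hf τ hiIcc.1 i
    have hεe : 0 < ε * e := mul_pos hε hepos
    have hne : (C - ∑ j, M τ i j) * (ε * e) ≥ 0 :=
      mul_nonneg (sub_nonneg.2 hsum2) hεe.le
    have hDpos : 0 < D := by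
      have hD : D = (M τ *ᵥ y τ) i + f τ i + ε * (e * K) := by
        rw [hDdef, Pi.add_apply]
      rw [hD, hmv, hKdef]
      nlinarith [hsum1, hfτ, hεe, hne]
    exact absurd hD0 (not_le.2 hDpos)
  -- conclude nonnegativity from the claim
  by_contra hneg
  push_neg at hneg
  set ε : ℝ := -y t₁ i₀ / Real.exp (K * (t₁ - t₀)) with hεdef
  have hε : 0 < ε := div_pos (neg_pos.2 hneg) (Real.exp_pos _)
  have h1 := claim ε hε t₁ ⟨ht₁, le_refl t₁⟩ i₀
  have h2 : ε * Real.exp (K * (t₁ - t₀)) = -y t₁ i₀ :=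
    div_mul_cancel₀ _ (Real.exp_ne_zero _)
  rw [h2] at h1
  linarith

/-- Truncation domination for a time-inhomogeneous master equation: the solution of
the dynamics restricted to a subset `S` of states stays nonnegative and is dominated
componentwise by the exact solution. -/
theorem cme_truncation_domination
    {ι : Type*} [Fintype ι] [DecidableEq ι]
    (A : ℝ → Matrix ι ι ℝ) (hA : Continuous A)
    (hoff : ∀ (t : ℝ) (i j : ι), i ≠ j → 0 ≤ A t i j)
    (hcol : ∀ (t : ℝ) (j : ι), ∑ i, A t i j = 0)
    (t₀ : ℝ) (π : ℝ → ι → ℝ)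
    (hπ : ∀ t : ℝ, t₀ ≤ t → HasDerivWithinAt π (A t *ᵥ π t) (Set.Ici t₀) t)
    (hπ0 : ∀ i : ι, 0 ≤ π t₀ i)
    (S : Finset ι)
    (Ahat : ℝ → Matrix S S ℝ)
    (hAhat : ∀ (t : ℝ) (i j : S), Ahat t i j = A t i j)
    (πhat : ℝ → S → ℝ)
    (hπhat : ∀ t : ℝ, t₀ ≤ t →
      HasDerivWithinAt πhat (Ahat t *ᵥ πhat t) (Set.Ici t₀) t)
    (hπhat0 : ∀ i : S, πhat t₀ i = π t₀ i) :
    ∀ t : ℝ, t₀ ≤ t → ∀ i : S, 0 ≤ πhat t i ∧ πhat t i ≤ π t i := by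
  -- Continuity of the truncated matrix
  have hAhatc : Continuous Ahat := by
    refine continuous_matrix fun i j => ?_
    have h1 : (fun t => Ahat t i j) = fun t => A t i j :=
      funext fun t => hAhat t i j
    rw [h1]
    exact hA.matrix_elem i j
  have hoffhat : ∀ (t : ℝ) (i j : S), i ≠ j → 0 ≤ Ahat t i j := by
    intro t i j hij
    rw [hAhat]
    exact hoff t i j (fun h => hij (Subtype.ext h))
  -- nonnegativity of the full solution
  have hπnn : ∀ t : ℝ, t₀ ≤ t → ∀ i, 0 ≤ π t i := by
    refine cme_metzler_nonneg A hA hoff t₀ (fun _ _ => 0) (fun _ _ _ => le_refl 0) π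
      (fun t ht => ?_) hπ0
    have := hπ t ht
    convert this using 1
    funext j
    simp
  -- nonnegativity of the truncated solution
  have hπhatnn : ∀ t : ℝ, t₀ ≤ t → ∀ i, 0 ≤ πhat t i := by
    refine cme_metzler_nonneg Ahat hAhatc hoffhat t₀ (fun _ _ => 0)
      (fun _ _ _ => le_refl 0) πhat (fun t ht => ?_) (fun i => ?_)
    · have := hπhat t ht
      convert this using 1
      funext j
      simp
    · rw [hπhat0 i]; exact hπ0 i
  -- the difference satisfies a Metzler equation with nonnegative forcing
  set d : ℝ → S → ℝ := fun t i => π t i - πhat t i with hddef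
  set F : ℝ → S → ℝ := fun t i => ∑ j ∈ Sᶜ, A t i j * π t j with hFdef
  have hFnn : ∀ t : ℝ, t₀ ≤ t → ∀ i : S, 0 ≤ F t i := by
    intro t ht i
    refine Finset.sum_nonneg fun j hj => ?_
    refine mul_nonneg (hoff t i j ?_) (hπnn t ht j)
    intro h
    exact (Finset.mem_compl.1 hj) (h ▸ i.2)
  have hd : ∀ t : ℝ, t₀ ≤ t → HasDerivWithinAt d (Ahat t *ᵥ d t + F t) (Set.Ici t₀) t := by
    intro t ht
    rw [hasDerivWithinAt_pi]
    intro i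
    have h1 : HasDerivWithinAt (fun u => π u i.1) ((A t *ᵥ π t) i.1) (Set.Ici t₀) t :=
      hasDerivWithinAt_pi.1 (hπ t ht) i.1
    have h2 : HasDerivWithinAt (fun u => πhat u i) ((Ahat t *ᵥ πhat t) i) (Set.Ici t₀) t :=
      hasDerivWithinAt_pi.1 (hπhat t ht) i
    have h3 := h1.sub h2
    convert h3 using 1
    show (Ahat t *ᵥ d t) i + F t i = (A t *ᵥ π t) i.1 - (Ahat t *ᵥ πhat t) i
    simp only [Matrix.mulVec, dotProduct]
    have e1 : ∀ j : S, Ahat t i j = A t i.1 j.1 := hAhat t i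
    have key : (∑ j : S, A t i.1 j.1 * π t j.1) + F t i = ∑ j, A t i.1 j * π t j := by
      rw [hFdef]
      rw [Finset.sum_coe_sort S (fun j => A t i.1 j * π t j)]
      exact Finset.sum_add_sum_compl S _
    have expand : ∑ j : S, Ahat t i j * d t j
        = (∑ j : S, A t i.1 j.1 * π t j.1) - ∑ j : S, Ahat t i j * πhat t j := by
      simp only [hddef, e1, mul_sub, Finset.sum_sub_distrib]
    rw [expand]
    linarith [key]
    rfl
  have hdnn : ∀ t : ℝ, t₀ ≤ t → ∀ i : S, 0 ≤ d t i := by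
    refine cme_metzler_nonneg Ahat hAhatc hoffhat t₀ F hFnn d hd (fun i => ?_)
    simp only [hddef]
    rw [hπhat0 i, sub_self]
  intro t ht i
  exact ⟨hπhatnn t ht i, sub_nonneg.1 (hdnn t ht i)⟩
end

section
/- Let ι be a finite type and let A : ℝ → Matrix ι ι ℝ be continuous such that for every t: A(t)_{ij} ≥ 0 for all i ≠ j and ∑_i A(t)_{ij} = 0 for every j. Let t₀ ∈ ℝ and let π : ℝ → (ι → ℝ) solve π'(t) = A(t) π(t) for t ≥ t₀ with π(t₀) entrywise nonnegative and ∑_i π_i(t₀) = 1. Let S ⊆ ι, let Â(t) be the submatrix of A(t) restricted to S × S, and let π̂ : ℝ → (S → ℝ) solve π̂'(t) = Â(t) π̂(t) with π̂(t₀) equal to the restriction of π(t₀) to S. If at some time T ≥ t₀ one has ∑_{i ∈ S} π̂_i(T) ≥ 1 − δ for some δ ≥ 0, then ∑_{i ∈ S} |π_i(T) − π̂_i(T)| ≤ δ, i.e., the l¹ distance between the restriction of the exact solution to S and the truncated solution is at most δ. -/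
open Matrix Finset Filter

/-- Nonnegativity invariance for linear ODEs `x' = M t *ᵥ x + g t` with nonnegative
off-diagonal coefficients and nonnegative inhomogeneity. -/
lemma cme_nonneg_invariant {ι : Type*} [Fintype ι]
    (M : ℝ → Matrix ι ι ℝ) (g x : ℝ → ι → ℝ) (t₀ T K : ℝ)
    (hderiv : ∀ t : ℝ, t₀ ≤ t →
      HasDerivWithinAt x (fun i => (M t *ᵥ x t) i + g t i) (Set.Ici t₀) t)
    (hoff : ∀ t ∈ Set.Icc t₀ T, ∀ i j : ι, i ≠ j → 0 ≤ M t i j)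
    (hK : ∀ t ∈ Set.Icc t₀ T, ∀ i j : ι, |M t i j| ≤ K)
    (hg : ∀ t ∈ Set.Icc t₀ T, ∀ i : ι, 0 ≤ g t i)
    (hx0 : ∀ i : ι, 0 ≤ x t₀ i) :
    ∀ t ∈ Set.Icc t₀ T, ∀ i : ι, 0 ≤ x t i := by
  rcases isEmpty_or_nonempty ι with h | h
  · exact fun t ht i => (IsEmpty.false i).elim
  intro t ht i
  rcases ht with ⟨ht₀, htT⟩
  -- set up
  set n : ℝ := (Fintype.card ι : ℝ) with hn
  have hnpos : 0 < n := by
    rw [hn]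
    exact_mod_cast Fintype.card_pos (α := ι)
  have hK0 : 0 ≤ K := le_trans (abs_nonneg _) (hK t₀ ⟨le_refl _, le_trans ht₀ htT⟩
    (Classical.arbitrary ι) (Classical.arbitrary ι))
  set D : ℝ → ι → ℝ := fun t i => (M t *ᵥ x t) i + g t i with hD
  set f : ℝ → ℝ := fun t => ∑ i, max 0 (-(x t i)) with hf
  set F' : ℝ → ℝ := fun t => ∑ i, (if x t i ≤ 0 then max 0 (-(D t i)) else 0) with hF'
  -- component derivatives
  have hci : ∀ s : ℝ, t₀ ≤ s → ∀ i : ι,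
      HasDerivWithinAt (fun z => x z i) (D s i) (Set.Ici t₀) s := by
    intro s hs i
    exact hasDerivWithinAt_pi.1 (hderiv s hs) i
  -- continuity of x on Icc
  have hxc : ∀ i : ι, ContinuousOn (fun z => x z i) (Set.Icc t₀ T) := by
    intro i s hs
    exact ((hci s hs.1 i).continuousWithinAt).mono Set.Icc_subset_Ici_self
  have hfc : ContinuousOn f (Set.Icc t₀ T) := by
    apply continuousOn_finset_sum
    intro i _
    exact continuousOn_const.sup (hxc i).neg
  have hfnonneg : ∀ s, 0 ≤ f s := fun s =>
    Finset.sum_nonneg (fun i _ => le_max_left _ _)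
  -- liminf slope condition
  have hslopecond : ∀ s ∈ Set.Ico t₀ T, ∀ r, F' s < r →
      ∃ᶠ z in nhdsWithin s (Set.Ioi s), (z - s)⁻¹ * (f z - f s) < r := by
    intro s hs r hr
    apply Filter.Eventually.frequently
    set η : ℝ := (r - F' s) / n with hη
    have hηpos : 0 < η := div_pos (sub_pos.2 hr) hnpos
    have hsub : Set.Ioi s ⊆ Set.Ici t₀ := fun z hz => le_of_lt (lt_of_le_of_lt hs.1 hz)
    -- slope of each component tends to D s i
    have hslope : ∀ i : ι, Tendsto (fun z => (z - s)⁻¹ * (x z i - x s i))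
        (nhdsWithin s (Set.Ioi s)) (nhds (D s i)) := by
      intro i
      have h1 := (hasDerivWithinAt_iff_tendsto_slope).1 ((hci s hs.1 i).mono hsub)
      have h2 : Set.Ioi s \ {s} = Set.Ioi s :=
        Set.diff_singleton_eq_self (fun hmem => lt_irrefl s hmem)
      rw [h2] at h1
      convert h1 using 2 with z
      simp only [slope, vsub_eq_sub, smul_eq_mul]
    have hcont : ∀ i : ι, Tendsto (fun z => x z i)
        (nhdsWithin s (Set.Ioi s)) (nhds (x s i)) := by
      intro i
      exact ((hci s hs.1 i).continuousWithinAt).mono hsub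
    -- per-component eventual bound
    have key : ∀ i : ι, ∀ᶠ z in nhdsWithin s (Set.Ioi s),
        (z - s)⁻¹ * (max 0 (-(x z i)) - max 0 (-(x s i)))
          < (if x s i ≤ 0 then max 0 (-(D s i)) else 0) + η := by
      intro i
      rcases lt_trichotomy (x s i) 0 with hlt | heq | hgt
      · have hev1 : ∀ᶠ z in nhdsWithin s (Set.Ioi s), x z i < 0 :=
          (hcont i).eventually_lt_const hlt
        have hev2 : ∀ᶠ z in nhdsWithin s (Set.Ioi s),
            -((z - s)⁻¹ * (x z i - x s i)) < max 0 (-(D s i)) + η := by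
          apply (hslope i).neg.eventually_lt_const
          calc -(D s i) ≤ max 0 (-(D s i)) := le_max_right _ _
            _ < max 0 (-(D s i)) + η := lt_add_of_pos_right _ hηpos
        filter_upwards [hev1, hev2] with z hz1 hz2
        rw [if_pos hlt.le, max_eq_right (neg_nonneg.2 hz1.le),
          max_eq_right (neg_nonneg.2 hlt.le)]
        calc (z - s)⁻¹ * (-(x z i) - -(x s i))
            = -((z - s)⁻¹ * (x z i - x s i)) := by ring
          _ < max 0 (-(D s i)) + η := hz2
      · have hten : Tendsto (fun z => max 0 (-((z - s)⁻¹ * (x z i - x s i))))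
            (nhdsWithin s (Set.Ioi s)) (nhds (max 0 (-(D s i)))) :=
          tendsto_const_nhds.max (hslope i).neg
        have hev2 : ∀ᶠ z in nhdsWithin s (Set.Ioi s),
            max 0 (-((z - s)⁻¹ * (x z i - x s i))) < max 0 (-(D s i)) + η :=
          hten.eventually_lt_const (lt_add_of_pos_right _ hηpos)
        filter_upwards [hev2, self_mem_nhdsWithin] with z hz2 hz3
        have hzs : (0:ℝ) ≤ (z - s)⁻¹ := inv_nonneg.2 (sub_nonneg.2 (le_of_lt hz3))
        rw [if_pos heq.le, heq, neg_zero, max_self, sub_zero,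
          mul_max_of_nonneg _ _ hzs, mul_zero]
        have heq2 : (z - s)⁻¹ * -(x z i) = -((z - s)⁻¹ * (x z i - x s i)) := by
          rw [heq]; ring
        rw [heq2]
        exact hz2
      · have hev1 : ∀ᶠ z in nhdsWithin s (Set.Ioi s), 0 < x z i :=
          (hcont i).eventually_const_lt hgt
        filter_upwards [hev1] with z hz1
        rw [if_neg (not_le.2 hgt), max_eq_left (neg_nonpos.2 hz1.le),
          max_eq_left (neg_nonpos.2 hgt.le), sub_zero, mul_zero, zero_add]
        exact hηpos
    have keyall : ∀ᶠ z in nhdsWithin s (Set.Ioi s), ∀ i ∈ Finset.univ (α := ι),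
        (z - s)⁻¹ * (max 0 (-(x z i)) - max 0 (-(x s i)))
          < (if x s i ≤ 0 then max 0 (-(D s i)) else 0) + η :=
      (Filter.eventually_all_finset _).2 (fun i _ => key i)
    filter_upwards [keyall] with z hz
    have hsum : (z - s)⁻¹ * (f z - f s)
        = ∑ i, (z - s)⁻¹ * (max 0 (-(x z i)) - max 0 (-(x s i))) := by
      rw [hf]
      rw [← Finset.sum_sub_distrib, Finset.mul_sum]
    rw [hsum]
    calc ∑ i, (z - s)⁻¹ * (max 0 (-(x z i)) - max 0 (-(x s i)))
        < ∑ i : ι, ((if x s i ≤ 0 then max 0 (-(D s i)) else 0) + η) :=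
          Finset.sum_lt_sum_of_nonempty Finset.univ_nonempty (fun i _ => hz i (Finset.mem_univ i))
      _ = F' s + n * η := by
          rw [Finset.sum_add_distrib, Finset.sum_const, hF']
          simp [hn, mul_comm]
      _ = r := by
          rw [hη, mul_div_cancel₀ _ (ne_of_gt hnpos)]
          ring
  -- differential inequality bound
  have hbound : ∀ s ∈ Set.Ico t₀ T, F' s ≤ (n * K) * f s + 0 := by
    intro s hs
    have hsmem : s ∈ Set.Icc t₀ T := ⟨hs.1, hs.2.le⟩
    rw [add_zero, hF']
    have hterm : ∀ i : ι, (if x s i ≤ 0 then max 0 (-(D s i)) else 0) ≤ K * f s := by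
      intro i
      have hKf : 0 ≤ K * f s := mul_nonneg hK0 (hfnonneg s)
      split_ifs with hxi
      · apply max_le hKf
        have : -(D s i) ≤ ∑ j, K * max 0 (-(x s j)) := by
          have h1 : -(D s i) ≤ ∑ j, M s i j * (-(x s j)) := by
            have he : ∑ j, M s i j * (-(x s j)) = -((M s *ᵥ x s) i) := by
              simp [mulVec, dotProduct, mul_neg, Finset.sum_neg_distrib]
            have hgi := hg s hsmem i
            rw [he, hD]
            simp only []
            linarith
          refine le_trans h1 (Finset.sum_le_sum fun j _ => ?_)
          rcases le_or_gt (x s j) 0 with hxj | hxj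
          · rw [max_eq_right (neg_nonneg.2 hxj)]
            exact mul_le_mul_of_nonneg_right
              (le_trans (le_abs_self _) (hK s hsmem i j)) (neg_nonneg.2 hxj)
          · rw [max_eq_left (neg_nonpos.2 hxj.le), mul_zero]
            have hij : i ≠ j := fun h => absurd (h ▸ hxj) (not_lt.2 hxi)
            exact mul_nonpos_of_nonneg_of_nonpos (hoff s hsmem i j hij)
              (neg_nonpos.2 hxj.le)
        calc -(D s i) ≤ ∑ j, K * max 0 (-(x s j)) := this
          _ = K * f s := by rw [hf, Finset.mul_sum]
      · exact hKf
    calc ∑ i, (if x s i ≤ 0 then max 0 (-(D s i)) else 0)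
        ≤ ∑ _i : ι, K * f s := Finset.sum_le_sum (fun i _ => hterm i)
      _ = n * (K * f s) := by rw [Finset.sum_const]; simp [hn]
      _ = (n * K) * f s := by ring
  have hf0 : f t₀ ≤ 0 := by
    rw [hf]
    apply le_of_eq
    apply Finset.sum_eq_zero
    intro i _
    rw [max_eq_left (neg_nonpos.2 (hx0 i))]
  have := le_gronwallBound_of_liminf_deriv_right_le hfc hslopecond hf0 hbound
    t ⟨ht₀, htT⟩
  rw [gronwallBound_ε0_δ0] at this
  have hft : f t = 0 := le_antisymm this (hfnonneg t)
  have hi : max 0 (-(x t i)) = 0 := by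
    have := (Finset.sum_eq_zero_iff_of_nonneg (fun j _ => le_max_left _ _)).1 hft i
      (Finset.mem_univ i)
    exact this
  have : -(x t i) ≤ 0 := max_eq_left_iff.1 hi
  linarith


/-- l¹ error certificate for the truncated master equation: if the truncated solution
retains mass at least `1 - δ` at time `T`, then the l¹ distance between the restriction
of the exact solution to the retained set `S` and the truncated solution is at most `δ`. -/
theorem cme_truncation_l1_error
    {ι : Type*} [Fintype ι] [DecidableEq ι]
    (A : ℝ → Matrix ι ι ℝ) (hA : Continuous A)
    (hoff : ∀ (t : ℝ) (i j : ι), i ≠ j → 0 ≤ A t i j)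
    (hcol : ∀ (t : ℝ) (j : ι), ∑ i, A t i j = 0)
    (t₀ : ℝ) (π : ℝ → ι → ℝ)
    (hπ : ∀ t : ℝ, t₀ ≤ t → HasDerivWithinAt π (A t *ᵥ π t) (Set.Ici t₀) t)
    (hπ0 : ∀ i : ι, 0 ≤ π t₀ i) (hπ0sum : ∑ i, π t₀ i = 1)
    (S : Finset ι)
    (Ahat : ℝ → Matrix S S ℝ)
    (hAhat : ∀ (t : ℝ) (i j : S), Ahat t i j = A t i j)
    (πhat : ℝ → S → ℝ)
    (hπhat : ∀ t : ℝ, t₀ ≤ t →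
      HasDerivWithinAt πhat (Ahat t *ᵥ πhat t) (Set.Ici t₀) t)
    (hπhat0 : ∀ i : S, πhat t₀ i = π t₀ i)
    (T δ : ℝ) (hT : t₀ ≤ T) (hδ : 0 ≤ δ)
    (hmass : 1 - δ ≤ ∑ i : S, πhat T i) :
    ∑ i : S, |π T i - πhat T i| ≤ δ := by
  classical
  -- entrywise continuity and a uniform bound on [t₀, T]
  have hA' : ∀ i j : ι, Continuous fun t => A t i j := fun i j =>
    (continuous_apply j).comp ((continuous_apply i).comp hA)
  have hφ : Continuous fun t : ℝ => ∑ i : ι, ∑ j : ι, |A t i j| :=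
    continuous_finset_sum _ fun i _ => continuous_finset_sum _ fun j _ => (hA' i j).abs
  obtain ⟨t₁, ht₁, hmax⟩ :
      ∃ t₁ ∈ Set.Icc t₀ T,
        IsMaxOn (fun t : ℝ => ∑ i : ι, ∑ j : ι, |A t i j|) (Set.Icc t₀ T) t₁ :=
    IsCompact.exists_isMaxOn isCompact_Icc (Set.nonempty_Icc.2 hT) hφ.continuousOn
  set K : ℝ := ∑ i : ι, ∑ j : ι, |A t₁ i j| with hKdef
  have hKb : ∀ t ∈ Set.Icc t₀ T, ∀ i j : ι, |A t i j| ≤ K := by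
    intro t ht i j
    calc |A t i j| ≤ ∑ j' : ι, |A t i j'| :=
          Finset.single_le_sum (f := fun j' : ι => |A t i j'|)
            (fun j' _ => abs_nonneg _) (Finset.mem_univ j)
      _ ≤ ∑ i' : ι, ∑ j' : ι, |A t i' j'| :=
          Finset.single_le_sum (f := fun i' : ι => ∑ j' : ι, |A t i' j'|)
            (fun i' _ => Finset.sum_nonneg fun _ _ => abs_nonneg _) (Finset.mem_univ i)
      _ ≤ K := hmax ht
  -- π is entrywise nonnegative on [t₀, T]
  have hπnn : ∀ t ∈ Set.Icc t₀ T, ∀ i : ι, 0 ≤ π t i := by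
    apply cme_nonneg_invariant A (fun _ _ => 0) π t₀ T K ?_
      (fun t _ i j hij => hoff t i j hij) hKb (fun _ _ _ => le_refl 0) hπ0
    intro t ht
    have := hπ t ht
    convert this using 1
    funext i
    simp
  -- mass conservation for π
  have hst : ∀ t : ℝ, t₀ ≤ t →
      HasDerivWithinAt (fun z => ∑ i : ι, π z i) 0 (Set.Ici t₀) t := by
    intro t ht
    have hd := HasDerivWithinAt.fun_sum
      (fun (i : ι) (_ : i ∈ Finset.univ) => hasDerivWithinAt_pi.1 (hπ t ht) i)
    have hz : ∑ i : ι, (A t *ᵥ π t) i = 0 := by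
      simp only [mulVec, dotProduct]
      rw [Finset.sum_comm]
      have : ∀ j : ι, ∑ i : ι, A t i j * π t j = 0 := by
        intro j
        rw [← Finset.sum_mul, hcol, zero_mul]
      simp only [this, Finset.sum_const_zero]
    rwa [hz] at hd
  have hsum1 : ∑ i : ι, π T i = 1 := by
    have hcont : ContinuousOn (fun z => ∑ i : ι, π z i) (Set.Icc t₀ T) := by
      intro s hs
      exact ((hst s hs.1).continuousWithinAt).mono Set.Icc_subset_Ici_self
    have := constant_of_has_deriv_right_zero hcont
      (fun s hs => (hst s hs.1).mono (Set.Ici_subset_Ici.2 hs.1))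
      T (Set.right_mem_Icc.2 hT)
    rw [this, hπ0sum]
  -- domination: π - πhat solves a linear ODE with nonnegative inhomogeneity
  set g : ℝ → S → ℝ := fun t i => ∑ j ∈ Sᶜ, A t i j * π t j with hgdef
  have hyd : ∀ t : ℝ, t₀ ≤ t →
      HasDerivWithinAt (fun z => (fun i : S => π z i - πhat z i))
        (fun i : S => (Ahat t *ᵥ fun j : S => π t j - πhat t j) i + g t i)
        (Set.Ici t₀) t := by
    intro t ht
    have h1 : HasDerivWithinAt (fun z => (fun i : S => π z i))
        (fun i : S => (A t *ᵥ π t) (i : ι)) (Set.Ici t₀) t :=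
      hasDerivWithinAt_pi.2 fun i => hasDerivWithinAt_pi.1 (hπ t ht) i
    have h2 := hπhat t ht
    have h3 := h1.sub h2
    refine HasDerivWithinAt.congr_deriv h3 (Eq.symm ?_)
    funext i
    show (Ahat t *ᵥ fun j : S => π t j - πhat t j) i + g t i
        = (A t *ᵥ π t) (i : ι) - (Ahat t *ᵥ πhat t) i
    simp only [mulVec, dotProduct, hAhat, hgdef]
    have hsplit : ∑ j : ι, A t i j * π t j
        = (∑ j ∈ S, A t i j * π t j) + ∑ j ∈ Sᶜ, A t i j * π t j :=
      (Finset.sum_add_sum_compl S _).symm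
    rw [hsplit, ← Finset.sum_coe_sort S (fun j => A t (i : ι) j * π t j)]
    have e1 : ∑ j : S, A t (i : ι) j * (π t j - πhat t j)
        = (∑ j : S, A t (i : ι) j * π t j) - ∑ j : S, A t (i : ι) j * πhat t j := by
      rw [← Finset.sum_sub_distrib]
      exact Finset.sum_congr rfl fun j _ => by ring
    rw [e1]
    ring
  have hdom : ∀ t ∈ Set.Icc t₀ T, ∀ i : S, 0 ≤ π t i - πhat t i := by
    apply cme_nonneg_invariant Ahat g (fun z => (fun i : S => π z i - πhat z i)) t₀ T K hyd
    · intro t ht i j hij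
      rw [hAhat]
      exact hoff t i j (fun h => hij (Subtype.coe_injective h))
    · intro t ht i j
      rw [hAhat]
      exact hKb t ht i j
    · intro t ht i
      apply Finset.sum_nonneg
      intro j hj
      have hij : (i : ι) ≠ j := fun h => (Finset.mem_compl.1 hj) (h ▸ i.2)
      exact mul_nonneg (hoff t i j hij) (hπnn t ht j)
    · intro i
      rw [hπhat0 i, sub_self]
  have hdomT : ∀ i : S, 0 ≤ π T i - πhat T i :=
    hdom T (Set.right_mem_Icc.2 hT)
  have habs : ∑ i : S, |π T i - πhat T i| = ∑ i : S, (π T i - πhat T i) :=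
    Finset.sum_congr rfl fun i _ => abs_of_nonneg (hdomT i)
  rw [habs, Finset.sum_sub_distrib]
  have hle : ∑ i : S, π T (i : ι) ≤ 1 := by
    rw [Finset.sum_coe_sort]
    calc ∑ i ∈ S, π T i ≤ ∑ i : ι, π T i :=
          Finset.sum_le_sum_of_subset_of_nonneg (Finset.subset_univ S)
            (fun i _ _ => hπnn T (Set.right_mem_Icc.2 hT) i)
      _ = 1 := hsum1
  linarith
end

section
/- Let ι be a finite type, let A : ℝ → Matrix ι ι ℝ be continuous such that for every t: A(t)_{ij} ≥ 0 for i ≠ j and ∑_i A(t)_{ij} = 0 for every j, and let f : ι → ℕ be a level function such that A(t)_{ij} = 0 whenever i ≠ j and f(i) > f(j) (no transition increases the level). Let π : ℝ → (ι → ℝ) solve π'(t) = A(t) π(t) with π(t₀) entrywise nonnegative. Then for every n₀ ∈ ℕ, the upper tail t ↦ ∑_{i : f(i) ≥ n₀} π_i(t) is nonincreasing on [t₀, ∞), and the lower tail t ↦ ∑_{i : f(i) ≤ n₀} π_i(t) is nondecreasing on [t₀, ∞). -/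
open Matrix Finset

/-- Positivity preservation for a master equation with Metzler generator. -/
lemma cme_nonneg_preserved
    {ι : Type*} [Fintype ι] [DecidableEq ι]
    (A : ℝ → Matrix ι ι ℝ) (hA : Continuous A)
    (hoff : ∀ (t : ℝ) (i j : ι), i ≠ j → 0 ≤ A t i j)
    (t₀ : ℝ) (π : ℝ → ι → ℝ)
    (hπ : ∀ t : ℝ, t₀ ≤ t → HasDerivWithinAt π (A t *ᵥ π t) (Set.Ici t₀) t)
    (hπ0 : ∀ i : ι, 0 ≤ π t₀ i) :
    ∀ t : ℝ, t₀ ≤ t → ∀ i : ι, 0 ≤ π t i := by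
  intro b hb
  -- bound on the entries of A on [t₀, b]
  have hg : Continuous (fun t => ∑ i : ι, ∑ j : ι, |A t i j|) := by
    refine continuous_finset_sum _ fun i _ => continuous_finset_sum _ fun j _ => ?_
    exact (hA.matrix_elem i j).abs
  obtain ⟨C, hC⟩ := (isCompact_Icc (a := t₀) (b := b)).exists_bound_of_continuousOn
    hg.continuousOn
  have hgC : ∀ t ∈ Set.Icc t₀ b, (∑ i : ι, ∑ j : ι, |A t i j|) ≤ C := fun t ht =>
    (le_abs_self _).trans (hC t ht)
  set L : ℝ := C + 1 with hL
  have hrow : ∀ t ∈ Set.Icc t₀ b, ∀ i : ι, ∑ j : ι, A t i j ≤ C := by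
    intro t ht i
    calc ∑ j : ι, A t i j ≤ ∑ j : ι, |A t i j| :=
          Finset.sum_le_sum fun j _ => le_abs_self _
      _ ≤ ∑ i : ι, ∑ j : ι, |A t i j| := by
          refine Finset.single_le_sum (f := fun i => ∑ j : ι, |A t i j|) ?_ (mem_univ i)
          intro k _; exact Finset.sum_nonneg fun j _ => abs_nonneg _
      _ ≤ C := hgC t ht
  -- continuity of π on [t₀, ∞)
  have πcont : ContinuousOn π (Set.Ici t₀) := fun t ht => (hπ t ht).continuousWithinAt
  -- the key claim with the ε-shift
  have key : ∀ ε : ℝ, 0 < ε → ∀ t ∈ Set.Icc t₀ b, ∀ i : ι,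
      0 < π t i + ε * Real.exp (L * (t - t₀)) := by
    intro ε hε
    by_contra hcon
    push_neg at hcon
    set σ : ℝ → ι → ℝ := fun t i => π t i + ε * Real.exp (L * (t - t₀)) with hσ
    set T : Set ℝ := {t ∈ Set.Icc t₀ b | ∃ i, σ t i ≤ 0} with hT
    have hTne : T.Nonempty := by
      obtain ⟨t, ht, i, hi⟩ := hcon
      exact ⟨t, ht, i, hi⟩
    have σcont : ∀ i : ι, ContinuousOn (fun t => σ t i) (Set.Ici t₀) := by
      intro i
      refine ContinuousOn.add ?_ (Continuous.continuousOn (by fun_prop)) 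
      exact (continuous_apply i).comp_continuousOn πcont
    have hTclosed : IsClosed T := by
      have : T = ⋃ i : ι, {t ∈ Set.Icc t₀ b | σ t i ≤ 0} := by
        ext t
        simp only [hT, Set.mem_setOf_eq, Set.mem_iUnion]
        tauto
      rw [this]
      refine isClosed_iUnion_of_finite fun i => ?_
      have : {t ∈ Set.Icc t₀ b | σ t i ≤ 0}
          = Set.Icc t₀ b ∩ (fun t => σ t i) ⁻¹' (Set.Iic 0) := by
        ext t
        simp only [Set.mem_setOf_eq, Set.mem_inter_iff, Set.mem_preimage, Set.mem_Iic]
      rw [this]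
      exact ContinuousOn.preimage_isClosed_of_isClosed
        ((σcont i).mono (Set.Icc_subset_Ici_self)) isClosed_Icc isClosed_Iic
    have hTcpt : IsCompact T := (isCompact_Icc (a := t₀) (b := b)).of_isClosed_subset
      hTclosed (fun t ht => ht.1)
    set τ : ℝ := sInf T with hτ
    have hτT : τ ∈ T := hTcpt.sInf_mem hTne
    obtain ⟨hτIcc, i, hτi⟩ := hτT
    have hσt₀ : ∀ j : ι, 0 < σ t₀ j := by
      intro j
      have : Real.exp (L * (t₀ - t₀)) = 1 := by simp
      simp only [hσ, this, mul_one]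
      exact add_pos_of_nonneg_of_pos (hπ0 j) hε
    have hτgt : t₀ < τ := by
      rcases lt_or_eq_of_le hτIcc.1 with h | h
      · exact h
      · exact absurd hτi (not_le.mpr (h ▸ hσt₀ i))
    -- all points strictly before τ (and ≥ t₀) are good
    have hbefore : ∀ t, t₀ ≤ t → t < τ → ∀ j, 0 < σ t j := by
      intro t ht hlt j
      by_contra h
      push_neg at h
      have : t ∈ T := ⟨⟨ht, hlt.le.trans hτIcc.2⟩, j, h⟩
      exact absurd (csInf_le hTcpt.bddBelow this) (not_le.mpr hlt)
    -- entrywise nonnegativity at τ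
    have hτnn : ∀ j : ι, 0 ≤ σ τ j := by
      intro j
      have hc : ContinuousAt (fun t => σ t j) τ :=
        ((σcont j) τ (le_of_lt hτgt)).continuousAt (Ici_mem_nhds hτgt)
      have hev : ∀ᶠ t in nhdsWithin τ (Set.Iio τ), 0 ≤ σ t j := by
        filter_upwards [Ioo_mem_nhdsLT_of_mem (Set.mem_Ioc.mpr ⟨hτgt, le_refl τ⟩)]
          with t ht
        exact (hbefore t ht.1.le ht.2 j).le
      exact ge_of_tendsto (hc.tendsto.mono_left nhdsWithin_le_nhds) hev
    have hτi0 : σ τ i = 0 := le_antisymm hτi (hτnn i)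
    -- derivative of σ_i at τ
    have hπd : HasDerivAt π (A τ *ᵥ π τ) τ :=
      (hπ τ hτgt.le).hasDerivAt (Ici_mem_nhds hτgt)
    have hπdi : HasDerivAt (fun t => π t i) ((A τ *ᵥ π τ) i) τ := hasDerivAt_pi.mp hπd i
    have hexpd : HasDerivAt (fun t : ℝ => ε * Real.exp (L * (t - t₀)))
        (ε * (Real.exp (L * (τ - t₀)) * L)) τ := by
      have h1 : HasDerivAt (fun t : ℝ => L * (t - t₀)) L τ := by
        simpa using ((hasDerivAt_id τ).sub_const t₀).const_mul L
      exact ((Real.hasDerivAt_exp _).comp τ h1).const_mul ε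
    have hσd : HasDerivAt (fun t => σ t i)
        ((A τ *ᵥ π τ) i + ε * (Real.exp (L * (τ - t₀)) * L)) τ := hπdi.add hexpd
    set d : ℝ := (A τ *ᵥ π τ) i + ε * (Real.exp (L * (τ - t₀)) * L) with hd
    -- d ≤ 0 since σ_i > 0 before τ and σ_i τ = 0
    have hdle : d ≤ 0 := by
      have hslope := hasDerivAt_iff_tendsto_slope.mp hσd
      have hmono : nhdsWithin τ (Set.Iio τ) ≤ nhdsWithin τ {τ}ᶜ :=
        nhdsWithin_mono τ (fun x hx => ne_of_lt hx)
      refine le_of_tendsto (hslope.mono_left hmono) ?_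
      filter_upwards [Ioo_mem_nhdsLT_of_mem (Set.mem_Ioc.mpr ⟨hτgt, le_refl τ⟩)]
        with t ht
      have hnum : 0 ≤ σ t i - σ τ i := by
        rw [hτi0, sub_zero]; exact (hbefore t ht.1.le ht.2 i).le
      have hden : t - τ < 0 := sub_neg.mpr ht.2
      rw [slope_def_field]
      exact div_nonpos_of_nonneg_of_nonpos hnum hden.le
    -- d > 0, contradiction
    have hdgt : 0 < d := by
      set E : ℝ := Real.exp (L * (τ - t₀)) with hE
      have hEpos : 0 < E := Real.exp_pos _
      have hπτ : ∀ j, π τ j = σ τ j - ε * E := by intro j; simp [hσ, hE]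
      have hmv : (A τ *ᵥ π τ) i = (∑ j : ι, A τ i j * σ τ j) - ε * E * ∑ j : ι, A τ i j := by
        simp only [mulVec, dotProduct, hπτ]
        rw [Finset.mul_sum, ← Finset.sum_sub_distrib]
        exact Finset.sum_congr rfl fun j _ => by ring
      have h1 : 0 ≤ ∑ j : ι, A τ i j * σ τ j := by
        refine Finset.sum_nonneg fun j _ => ?_
        rcases eq_or_ne i j with rfl | hij
        · rw [hτi0, mul_zero]
        · exact mul_nonneg (hoff τ i j hij) (hτnn j)
      have h2 : ∑ j : ι, A τ i j ≤ C := hrow τ hτIcc i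
      have hdeq : d = (∑ j : ι, A τ i j * σ τ j) + ε * E * (L - ∑ j : ι, A τ i j) := by
        rw [hd, hmv]; ring
      have hpos : 0 < ε * E * (L - ∑ j : ι, A τ i j) :=
        mul_pos (mul_pos hε hEpos) (lt_of_lt_of_le one_pos (by rw [hL]; linarith))
      linarith
    exact absurd hdle (not_le.mpr hdgt)
  -- let ε → 0
  intro i
  by_contra h
  push_neg at h
  set E : ℝ := Real.exp (L * (b - t₀)) with hE
  have hEpos : 0 < E := Real.exp_pos _
  have := key (-π b i / E) (div_pos (neg_pos.mpr h) hEpos) b ⟨hb, le_refl b⟩ i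
  rw [div_mul_cancel₀ _ (ne_of_gt hEpos)] at this
  linarith

/-- Monotonicity of level tails for a master equation whose transitions never increase
the level `f`: the upper-tail probability `∑_{f(i) ≥ n₀} π_i(t)` is nonincreasing in `t`
and the lower-tail probability `∑_{f(i) ≤ n₀} π_i(t)` is nondecreasing in `t`. -/
theorem cme_level_tail_monotonicity
    {ι : Type*} [Fintype ι] [DecidableEq ι]
    (A : ℝ → Matrix ι ι ℝ) (hA : Continuous A)
    (hoff : ∀ (t : ℝ) (i j : ι), i ≠ j → 0 ≤ A t i j)
    (hcol : ∀ (t : ℝ) (j : ι), ∑ i, A t i j = 0)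
    (f : ι → ℕ)
    (hlevel : ∀ (t : ℝ) (i j : ι), i ≠ j → f j < f i → A t i j = 0)
    (t₀ : ℝ) (π : ℝ → ι → ℝ)
    (hπ : ∀ t : ℝ, t₀ ≤ t → HasDerivWithinAt π (A t *ᵥ π t) (Set.Ici t₀) t)
    (hπ0 : ∀ i : ι, 0 ≤ π t₀ i) :
    ∀ n₀ : ℕ,
      AntitoneOn (fun t => ∑ i ∈ univ.filter (fun i => n₀ ≤ f i), π t i) (Set.Ici t₀)
      ∧ MonotoneOn (fun t => ∑ i ∈ univ.filter (fun i => f i ≤ n₀), π t i) (Set.Ici t₀) := by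
  intro n₀
  have hnn : ∀ t : ℝ, t₀ ≤ t → ∀ i : ι, 0 ≤ π t i :=
    cme_nonneg_preserved A hA hoff t₀ π hπ hπ0
  have πcont : ContinuousOn π (Set.Ici t₀) := fun t ht => (hπ t ht).continuousWithinAt
  -- derivative of a partial sum at an interior point
  have hderiv : ∀ (S : Finset ι) (x : ℝ), t₀ < x →
      HasDerivAt (fun t => ∑ i ∈ S, π t i) (∑ i ∈ S, (A x *ᵥ π x) i) x := by
    intro S x hx
    have hπd : HasDerivAt π (A x *ᵥ π x) x :=
      (hπ x hx.le).hasDerivAt (Ici_mem_nhds hx)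
    exact HasDerivAt.fun_sum fun i _ => hasDerivAt_pi.mp hπd i
  have hcontsum : ∀ S : Finset ι,
      ContinuousOn (fun t => ∑ i ∈ S, π t i) (Set.Ici t₀) :=
    fun S => continuousOn_finset_sum S fun i _ => (continuous_apply i).comp_continuousOn πcont
  constructor
  · -- upper tail antitone
    set S : Finset ι := univ.filter (fun i => n₀ ≤ f i) with hS
    have hsign : ∀ x : ℝ, t₀ ≤ x → (∑ i ∈ S, (A x *ᵥ π x) i) ≤ 0 := by
      intro x hx
      have : (∑ i ∈ S, (A x *ᵥ π x) i) = ∑ j : ι, (∑ i ∈ S, A x i j) * π x j := by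
        simp only [mulVec, dotProduct]
        rw [Finset.sum_comm]
        congr 1 with j
        rw [Finset.sum_mul]
      rw [this]
      refine Finset.sum_nonpos fun j _ => ?_
      by_cases hj : n₀ ≤ f j
      · refine mul_nonpos_of_nonpos_of_nonneg ?_ (hnn x hx j)
        have hsplit : (∑ i ∈ S, A x i j) + ∑ i ∈ univ.filter (fun i => ¬ n₀ ≤ f i), A x i j
            = ∑ i : ι, A x i j := Finset.sum_filter_add_sum_filter_not univ _ _
        have h2 : 0 ≤ ∑ i ∈ univ.filter (fun i => ¬ n₀ ≤ f i), A x i j := by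
          refine Finset.sum_nonneg fun i hi => ?_
          simp only [mem_filter] at hi
          have hij : i ≠ j := by
            intro h; exact hi.2 (h ▸ hj)
          exact hoff x i j hij
        rw [hcol x j] at hsplit
        linarith
      · have : ∀ i ∈ S, A x i j = 0 := by
          intro i hi
          simp only [hS, mem_filter] at hi
          have hfj : f j < f i := lt_of_lt_of_le (not_le.mp hj) hi.2
          have hij : i ≠ j := by
            intro h; rw [h] at hfj; exact lt_irrefl _ hfj
          exact hlevel x i j hij hfj
        rw [Finset.sum_eq_zero this, zero_mul]
    refine antitoneOn_of_deriv_nonpos (convex_Ici t₀) (hcontsum S) ?_ ?_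
    · intro x hx
      rw [interior_Ici] at hx
      exact (hderiv S x hx).differentiableAt.differentiableWithinAt
    · intro x hx
      rw [interior_Ici] at hx
      rw [(hderiv S x hx).deriv]
      exact hsign x hx.le
  · -- lower tail monotone
    set S : Finset ι := univ.filter (fun i => f i ≤ n₀) with hS
    have hsign : ∀ x : ℝ, t₀ ≤ x → 0 ≤ (∑ i ∈ S, (A x *ᵥ π x) i) := by
      intro x hx
      have : (∑ i ∈ S, (A x *ᵥ π x) i) = ∑ j : ι, (∑ i ∈ S, A x i j) * π x j := by
        simp only [mulVec, dotProduct]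
        rw [Finset.sum_comm]
        congr 1 with j
        rw [Finset.sum_mul]
      rw [this]
      refine Finset.sum_nonneg fun j _ => ?_
      by_cases hj : f j ≤ n₀
      · have hsplit : (∑ i ∈ S, A x i j) + ∑ i ∈ univ.filter (fun i => ¬ f i ≤ n₀), A x i j
            = ∑ i : ι, A x i j := Finset.sum_filter_add_sum_filter_not univ _ _
        have h2 : ∑ i ∈ univ.filter (fun i => ¬ f i ≤ n₀), A x i j = 0 := by
          refine Finset.sum_eq_zero fun i hi => ?_
          simp only [mem_filter] at hi
          have hfj : f j < f i := lt_of_le_of_lt hj (not_le.mp hi.2)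
          have hij : i ≠ j := by
            intro h; rw [h] at hfj; exact lt_irrefl _ hfj
          exact hlevel x i j hij hfj
        rw [hcol x j, h2, add_zero] at hsplit
        rw [hsplit, zero_mul]
      · refine mul_nonneg ?_ (hnn x hx j)
        refine Finset.sum_nonneg fun i hi => ?_
        simp only [hS, mem_filter] at hi
        have hij : i ≠ j := by
          intro h; exact hj (h ▸ hi.2)
        exact hoff x i j hij
    refine monotoneOn_of_deriv_nonneg (convex_Ici t₀) (hcontsum S) ?_ ?_
    · intro x hx
      rw [interior_Ici] at hx
      exact (hderiv S x hx).differentiableAt.differentiableWithinAt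
    · intro x hx
      rw [interior_Ici] at hx
      rw [(hderiv S x hx).deriv]
      exact hsign x hx.le
end

section
/- Let n ∈ ℕ with n ≥ 1, let p ∈ (0, 1), and let m ∈ ℕ with 1 ≤ m ≤ n·p and m < n. Then ∑_{m'=0}^{m} (n choose m') p^{m'} (1−p)^{n−m'} ≥ (1/√(2n)) · exp(−n · D(m/n ‖ p)), where D(a ‖ b) = a·ln(a/b) + (1−a)·ln((1−a)/(1−b)) denotes the Kullback-Leibler divergence in nats between Bernoulli(a) and Bernoulli(b). -/
open Finset

namespace BinTail

open Real Stirling Filter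

lemma sqrt_pi_le_stirling (j : ℕ) (hj : 1 ≤ j) : Real.sqrt π ≤ stirlingSeq j := by
  obtain ⟨i, rfl⟩ := Nat.exists_eq_add_of_le hj
  have htend : Tendsto (stirlingSeq ∘ Nat.succ) atTop (nhds (Real.sqrt π)) :=
    tendsto_stirlingSeq_sqrt_pi.comp (tendsto_add_atTop_nat 1)
  simpa [Nat.add_comm] using stirlingSeq'_antitone.le_of_tendsto htend i

lemma stirling_le_stirling (i j : ℕ) (hi : 1 ≤ i) (hij : i ≤ j) :
    stirlingSeq j ≤ stirlingSeq i := by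
  obtain ⟨a, rfl⟩ := Nat.exists_eq_add_of_le hi
  obtain ⟨b, rfl⟩ := Nat.exists_eq_add_of_le hij
  have := stirlingSeq'_antitone (le_add_right (le_refl a) : a ≤ a + b)
  simpa [Nat.succ_eq_add_one, Nat.add_comm, Nat.add_assoc, Nat.add_left_comm] using this

lemma stirlingSeq_pos' (j : ℕ) (hj : 1 ≤ j) : 0 < stirlingSeq j := by
  have := stirlingSeq'_pos (j - 1); rwa [Nat.sub_add_cancel hj] at this

lemma stirlingSeq_two : stirlingSeq 2 = Real.exp 1 ^ 2 / 4 := by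
  rw [stirlingSeq]
  norm_num
  rw [
    show rexp 2 = rexp 1 ^ 2 by rw [Real.exp_one_pow]; norm_num, div_pow]
  have := Real.exp_pos 1
  field_simp
  ring

lemma sq_le_of (a b : ℝ) (ha : 0 ≤ a) (hb : 0 ≤ b) (h : a^2 ≤ b^2) : a ≤ b := by nlinarith

lemma exp_one_le : rexp 1 ≤ 2.7182818286 := Real.exp_one_lt_d9.le

lemma key_one (k : ℕ) (hk : 2 ≤ k) :
    stirlingSeq 1 * stirlingSeq k * Real.sqrt k ≤ Real.sqrt π * (1 + (k:ℝ)) := by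
  have hs2 : stirlingSeq k ≤ rexp 1 ^ 2 / 4 := by
    rw [← stirlingSeq_two]; exact stirling_le_stirling 2 k (by norm_num) hk
  have hs2pos : (0:ℝ) < stirlingSeq k := stirlingSeq_pos' k (by omega)
  have h1 : stirlingSeq 1 * stirlingSeq k * Real.sqrt k
      ≤ (rexp 1 / Real.sqrt 2) * (rexp 1 ^ 2 / 4) * Real.sqrt k := by
    rw [stirlingSeq_one]
    gcongr
  refine h1.trans (sq_le_of _ _ (by positivity) (by positivity) ?_)
  have hsq2 : (Real.sqrt 2)^2 = 2 := Real.sq_sqrt (by norm_num)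
  have hsqk : (Real.sqrt (k:ℝ))^2 = k := Real.sq_sqrt (by positivity)
  have hsqpi : (Real.sqrt π)^2 = π := Real.sq_sqrt Real.pi_pos.le
  have he6 : rexp 1 ^ 6 ≤ 403.4288 := by
    calc rexp 1 ^ 6 ≤ (2.7182818286:ℝ)^6 := pow_le_pow_left₀ (Real.exp_pos 1).le exp_one_le 6
    _ ≤ 403.4288 := by norm_num
  have hk2 : (2:ℝ) ≤ (k:ℝ) := by exact_mod_cast hk
  have hpi := Real.pi_gt_d6
  have expand : (rexp 1 / Real.sqrt 2 * (rexp 1 ^ 2 / 4) * Real.sqrt k)^2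
      = rexp 1 ^ 6 / 32 * k := by
    rw [mul_pow, mul_pow, div_pow, div_pow, hsq2, hsqk]; ring
  have expand2 : (Real.sqrt π * (1 + (k:ℝ)))^2 = π * (1 + (k:ℝ))^2 := by
    rw [mul_pow, hsqpi]
  rw [expand, expand2]
  nlinarith [sq_nonneg ((k:ℝ) - 2), pow_pos (Real.exp_pos 1) 6]

lemma key (m k : ℕ) (hm : 1 ≤ m) (hk : 1 ≤ k) :
    stirlingSeq m * stirlingSeq k * Real.sqrt ((m:ℝ) * k)
      ≤ stirlingSeq (m + k) * ((m:ℝ) + k) := by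
  have hpi : Real.sqrt π ≤ stirlingSeq (m + k) := sqrt_pi_le_stirling _ (by omega)
  have hmk : (0:ℝ) < (m:ℝ) + k := by positivity
  rcases Nat.lt_or_ge m 2 with hm2 | hm2
  · have hm1 : m = 1 := by omega
    subst hm1
    simp only [Nat.cast_one] at *
    rcases Nat.lt_or_ge k 2 with hk2 | hk2
    · have hk1 : k = 1 := by omega
      subst hk1
      rw [stirlingSeq_one, show (1+1 : ℕ) = 2 from rfl, stirlingSeq_two]
      have h2 : Real.sqrt 2 * Real.sqrt 2 = 2 := Real.mul_self_sqrt (by norm_num)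
      have h2pos : (0:ℝ) < Real.sqrt 2 := Real.sqrt_pos.mpr (by norm_num)
      simp only [Nat.cast_one]
      rw [show Real.sqrt ((1:ℝ)*1) = 1 by norm_num]
      rw [div_mul_div_comm, h2]
      nlinarith [Real.exp_pos 1]
    · calc stirlingSeq 1 * stirlingSeq k * Real.sqrt ((1:ℝ) * k)
          ≤ Real.sqrt π * (1 + (k:ℝ)) := by
            rw [one_mul]; exact key_one k hk2
        _ ≤ stirlingSeq (1 + k) * ((1:ℝ) + k) := by
            exact mul_le_mul_of_nonneg_right hpi (by positivity)
  · rcases Nat.lt_or_ge k 2 with hk2 | hk2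
    · have hk1 : k = 1 := by omega
      subst hk1
      simp only [Nat.cast_one]
      calc stirlingSeq m * stirlingSeq 1 * Real.sqrt ((m:ℝ) * 1)
          = stirlingSeq 1 * stirlingSeq m * Real.sqrt m := by rw [mul_one]; ring
        _ ≤ Real.sqrt π * (1 + (m:ℝ)) := key_one m hm2
        _ ≤ stirlingSeq (m + 1) * ((m:ℝ) + 1) := by
            have := mul_le_mul_of_nonneg_right hpi (by positivity : (0:ℝ) ≤ (m:ℝ) + 1)
            linarith
    · -- both ≥ 2
      have hsm : stirlingSeq m ≤ rexp 1 ^ 2 / 4 := by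
        rw [← stirlingSeq_two]; exact stirling_le_stirling 2 m (by norm_num) hm2
      have hsk : stirlingSeq k ≤ rexp 1 ^ 2 / 4 := by
        rw [← stirlingSeq_two]; exact stirling_le_stirling 2 k (by norm_num) hk2
      have hsmpos : (0:ℝ) < stirlingSeq m := stirlingSeq_pos' m hm
      have hskpos : (0:ℝ) < stirlingSeq k := stirlingSeq_pos' k hk
      have hsqmk : Real.sqrt ((m:ℝ) * k) ≤ ((m:ℝ) + k) / 2 := by
        rw [show ((m:ℝ)+k)/2 = Real.sqrt ((((m:ℝ)+k)/2)^2) from (Real.sqrt_sq (by positivity)).symm]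
        exact Real.sqrt_le_sqrt (by nlinarith [sq_nonneg ((m:ℝ) - k)])
      have hc : rexp 1 ^ 2 / 4 * (rexp 1 ^ 2 / 4) ≤ 2 * Real.sqrt π := by
        apply sq_le_of _ _ (by positivity) (by positivity)
        have hsqpi : (Real.sqrt π)^2 = π := Real.sq_sqrt Real.pi_pos.le
        have he8 : rexp 1 ^ 8 ≤ 2981.0 := by
          calc rexp 1 ^ 8 ≤ (2.7182818286:ℝ)^8 := pow_le_pow_left₀ (Real.exp_pos 1).le exp_one_le 8
          _ ≤ 2981.0 := by norm_num
        have hpi2 := Real.pi_gt_d6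
        have expand : (2 * Real.sqrt π)^2 = 4 * π := by rw [mul_pow, hsqpi]; norm_num
        rw [expand]
        nlinarith
      have hsqnn : (0:ℝ) ≤ Real.sqrt ((m:ℝ) * k) := Real.sqrt_nonneg _
      calc stirlingSeq m * stirlingSeq k * Real.sqrt ((m:ℝ) * k)
          ≤ (rexp 1 ^ 2 / 4 * (rexp 1 ^ 2 / 4)) * Real.sqrt ((m:ℝ) * k) := by
            gcongr <;> positivity
        _ ≤ (rexp 1 ^ 2 / 4 * (rexp 1 ^ 2 / 4)) * (((m:ℝ) + k)/2) := by
            gcongr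
        _ ≤ (2 * Real.sqrt π) * (((m:ℝ) + k)/2) := by
            apply mul_le_mul_of_nonneg_right hc (by positivity)
        _ = Real.sqrt π * ((m:ℝ) + k) := by ring
        _ ≤ stirlingSeq (m + k) * ((m:ℝ) + k) := mul_le_mul_of_nonneg_right hpi hmk.le

end BinTail

namespace BinTail
open Real Stirling

lemma factorial_eq (j : ℕ) (hj : 1 ≤ j) :
    ((Nat.factorial j : ℕ) : ℝ) * rexp 1 ^ j = stirlingSeq j * (Real.sqrt (2 * (j:ℝ)) * (j:ℝ)^j) := by
  have hj0 : (0:ℝ) < (j:ℝ) := by exact_mod_cast Nat.lt_of_lt_of_le Nat.zero_lt_one hj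
  have hepos : (0:ℝ) < rexp 1 := Real.exp_pos 1
  have h1 : ((Nat.factorial j : ℕ) : ℝ) = stirlingSeq j * (Real.sqrt (2 * (j:ℝ)) * ((j:ℝ) / rexp 1) ^ j) := by
    rw [stirlingSeq, div_mul_cancel₀]
    positivity
  rw [h1, div_pow]
  field_simp

lemma choose_bound (n m k : ℕ) (hm : 1 ≤ m) (hk : 1 ≤ k) (hn : m + k = n) :
    (n:ℝ)^n ≤ (n.choose m : ℝ) * Real.sqrt (2 * (n:ℝ)) * (m:ℝ)^m * (k:ℝ)^k := by
  have hm_le : m ≤ n := by omega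
  have hchoose : ((n.choose m : ℕ) : ℝ) * ((Nat.factorial m : ℕ) : ℝ) * ((Nat.factorial k : ℕ) : ℝ) = ((Nat.factorial n : ℕ) : ℝ) := by
    have h := Nat.choose_mul_factorial_mul_factorial hm_le
    have hk' : n - m = k := by omega
    rw [hk'] at h
    exact_mod_cast h
  have hfm := factorial_eq m hm
  have hfk := factorial_eq k hk
  have hfn := factorial_eq n (by omega)
  have K := key m k hm hk
  have hcast : (m:ℝ) + k = n := by exact_mod_cast congrArg (Nat.cast : ℕ → ℝ) hn
  rw [hn, hcast] at K
  have hs2 : Real.sqrt (2*(m:ℝ)) * Real.sqrt (2*(k:ℝ)) = 2 * Real.sqrt ((m:ℝ)*k) := by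
    rw [← Real.sqrt_mul (by positivity), show (2*(m:ℝ))*(2*(k:ℝ)) = 4*((m:ℝ)*k) by ring,
      Real.sqrt_mul (by norm_num : (0:ℝ) ≤ 4), show Real.sqrt (4:ℝ) = 2 by
        rw [show (4:ℝ) = 2^2 by norm_num, Real.sqrt_sq (by norm_num : (0:ℝ) ≤ 2)]]
  have hsn : Real.sqrt (2*(n:ℝ)) * Real.sqrt (2*(n:ℝ)) = 2*(n:ℝ) :=
    Real.mul_self_sqrt (by positivity)
  have hP : (0:ℝ) < ((Nat.factorial m : ℕ) : ℝ) * ((Nat.factorial k : ℕ) : ℝ) * rexp 1 ^ n := by positivity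
  refine le_of_mul_le_mul_right ?_ hP
  have hen : rexp 1 ^ m * rexp 1 ^ k = rexp 1 ^ n := by rw [← pow_add, hn]
  calc (n:ℝ)^n * (((Nat.factorial m : ℕ) : ℝ) * ((Nat.factorial k : ℕ) : ℝ) * rexp 1 ^ n)
      = (n:ℝ)^n * (((Nat.factorial m : ℕ) : ℝ) * rexp 1 ^ m) * (((Nat.factorial k : ℕ) : ℝ) * rexp 1 ^ k) := by
        rw [← hen]; ring
    _ = (n:ℝ)^n * (stirlingSeq m * (Real.sqrt (2*(m:ℝ)) * (m:ℝ)^m))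
          * (stirlingSeq k * (Real.sqrt (2*(k:ℝ)) * (k:ℝ)^k)) := by rw [hfm, hfk]
    _ = (stirlingSeq m * stirlingSeq k * Real.sqrt ((m:ℝ)*k))
          * (2 * ((n:ℝ)^n * (m:ℝ)^m * (k:ℝ)^k)) := by
        linear_combination (stirlingSeq m * stirlingSeq k * (n:ℝ)^n * (m:ℝ)^m * (k:ℝ)^k) * hs2
    _ ≤ (stirlingSeq n * (n:ℝ)) * (2 * ((n:ℝ)^n * (m:ℝ)^m * (k:ℝ)^k)) := by
        apply mul_le_mul_of_nonneg_right K (by positivity)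
    _ = (stirlingSeq n * (Real.sqrt (2*(n:ℝ)) * (n:ℝ)^n))
          * (Real.sqrt (2*(n:ℝ)) * ((m:ℝ)^m * (k:ℝ)^k)) := by
        linear_combination (-(stirlingSeq n * (n:ℝ)^n * (m:ℝ)^m * (k:ℝ)^k)) * hsn
    _ = ((Nat.factorial n : ℕ) : ℝ) * rexp 1 ^ n * (Real.sqrt (2*(n:ℝ)) * ((m:ℝ)^m * (k:ℝ)^k)) := by
        rw [hfn]
    _ = (((n.choose m : ℕ):ℝ) * ((Nat.factorial m : ℕ) : ℝ) * ((Nat.factorial k : ℕ) : ℝ)) * rexp 1 ^ n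
          * (Real.sqrt (2*(n:ℝ)) * ((m:ℝ)^m * (k:ℝ)^k)) := by rw [hchoose]
    _ = (n.choose m : ℝ) * Real.sqrt (2*(n:ℝ)) * (m:ℝ)^m * (k:ℝ)^k
          * (((Nat.factorial m : ℕ) : ℝ) * ((Nat.factorial k : ℕ) : ℝ) * rexp 1 ^ n) := by ring

end BinTail

/-- Lower bound on the binomial lower tail: for `1 ≤ m ≤ np`, `m < n`,
`∑_{m'=0}^{m} C(n,m') p^{m'} (1-p)^{n-m'} ≥ (2n)^{-1/2} exp(-n D(m/n ‖ p))`. -/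
theorem binomial_lower_tail_lower_bound
    (n : ℕ) (hn : 1 ≤ n) (p : ℝ) (hp0 : 0 < p) (hp1 : p < 1)
    (m : ℕ) (hm1 : 1 ≤ m) (hm : (m : ℝ) ≤ n * p) (hmn : m < n)
    (D : ℝ → ℝ → ℝ)
    (hD : ∀ a b : ℝ, D a b = a * Real.log (a / b) + (1 - a) * Real.log ((1 - a) / (1 - b))) :
    (1 / Real.sqrt (2 * n)) * Real.exp (-(n : ℝ) * D ((m : ℝ) / n) p)
      ≤ ∑ m' ∈ range (m + 1), (n.choose m' : ℝ) * p ^ m' * (1 - p) ^ (n - m') := by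
  set k := n - m with hkdef
  have hk1 : 1 ≤ k := by omega
  have hmk : m + k = n := by omega
  have hn0 : (0:ℝ) < (n:ℝ) := by exact_mod_cast Nat.lt_of_lt_of_le Nat.zero_lt_one hn
  have hm0 : (0:ℝ) < (m:ℝ) := by exact_mod_cast Nat.lt_of_lt_of_le Nat.zero_lt_one hm1
  have hk0 : (0:ℝ) < (k:ℝ) := by exact_mod_cast Nat.lt_of_lt_of_le Nat.zero_lt_one hk1
  have hq : (0:ℝ) < 1 - p := by linarith
  have hcast : (m:ℝ) + k = n := by exact_mod_cast congrArg (Nat.cast : ℕ → ℝ) hmk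
  have hexp : Real.exp (-(n:ℝ) * D ((m:ℝ)/n) p)
      = (p*(n:ℝ)/m)^m * ((1-p)*(n:ℝ)/k)^k := by
    rw [hD]
    have h1 : (1:ℝ) - (m:ℝ)/n = (k:ℝ)/n := by field_simp; linarith
    rw [h1]
    have hL1 : Real.log ((m:ℝ)/n / p) = - Real.log (p * n / m) := by
      rw [← Real.log_inv]; congr 1; field_simp
    have hL2 : Real.log ((k:ℝ)/n / (1-p)) = - Real.log ((1-p) * n / k) := by
      rw [← Real.log_inv]; congr 1; field_simp
    rw [hL1, hL2,
      show -(n:ℝ) * ((m:ℝ)/n * -Real.log (p*n/m) + (k:ℝ)/n * -Real.log ((1-p)*n/k))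
        = (m:ℝ) * Real.log (p*n/m) + (k:ℝ) * Real.log ((1-p)*n/k) by field_simp; ring,
      Real.exp_add, Real.exp_nat_mul, Real.exp_nat_mul,
      Real.exp_log (by positivity), Real.exp_log (by positivity)]
  have hterm : (n.choose m : ℝ) * p^m * (1-p)^(n-m)
      ≤ ∑ m' ∈ range (m+1), (n.choose m' : ℝ) * p^m' * (1-p)^(n-m') :=
    Finset.single_le_sum (f := fun m' => (n.choose m' : ℝ) * p^m' * (1-p)^(n-m'))
      (fun i _ => by positivity) (by simp)
  refine le_trans ?_ hterm
  rw [hexp, ← hkdef]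
  have hA := BinTail.choose_bound n m k hm1 hk1 hmk
  have hsq : (0:ℝ) < Real.sqrt (2*(n:ℝ)) := Real.sqrt_pos.mpr (by positivity)
  have hpow : (n:ℝ)^m * (n:ℝ)^k = (n:ℝ)^n := by rw [← pow_add, hmk]
  have h := mul_le_mul_of_nonneg_right hA
    (show (0:ℝ) ≤ p^m * (1-p)^k by positivity)
  refine le_of_mul_le_mul_right ?_
    (show (0:ℝ) < Real.sqrt (2*(n:ℝ)) * (m:ℝ)^m * (k:ℝ)^k by positivity)
  calc (1 / Real.sqrt (2*(n:ℝ))) * ((p*(n:ℝ)/m)^m * ((1-p)*(n:ℝ)/k)^k)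
        * (Real.sqrt (2*(n:ℝ)) * (m:ℝ)^m * (k:ℝ)^k)
      = ((n:ℝ)^m * (n:ℝ)^k) * (p^m * (1-p)^k) := by
        rw [div_pow, div_pow, mul_pow, mul_pow]
        field_simp
    _ = (n:ℝ)^n * (p^m * (1-p)^k) := by rw [hpow]
    _ ≤ (n.choose m : ℝ) * Real.sqrt (2*(n:ℝ)) * (m:ℝ)^m * (k:ℝ)^k * (p^m * (1-p)^k) := h
    _ = (n.choose m : ℝ) * p^m * (1-p)^k * (Real.sqrt (2*(n:ℝ)) * (m:ℝ)^m * (k:ℝ)^k) := by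
        ring
end

section
/- Let C ∈ ℕ with C ≥ 1, let ō ∈ ℝ with 0 < ō < C, set q = ō/C, and let ε ∈ ℝ with 0 < ε < 1/√(2C). Suppose the set U = { m ∈ ℕ : m ≤ C and ∑_{m'=m}^{C} (C choose m') q^{m'} (1−q)^{C−m'} < ε } is nonempty and let O_max = min U. Then: (i) O_max ≥ ō + √((C − ō)·ō·((ε·√(2C))^{−1/C} − 1)); and (ii) every m ∈ ℕ with ō + √((C/2)·ln(1/ε)) < m ≤ C belongs to U, so in particular O_max < ō + √((C/2)·ln(1/ε)) + 1. -/
open Finset Stirling Nat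

lemma le_of_sq {a b : ℝ} (ha : 0 ≤ a) (hb : 0 ≤ b) (h : a^2 ≤ b^2) : a ≤ b := by
  rw [← Real.sqrt_sq ha, ← Real.sqrt_sq hb]; exact Real.sqrt_le_sqrt h

lemma sqrtpi_le (n : ℕ) : Real.sqrt Real.pi ≤ stirlingSeq (n+1) :=
  stirlingSeq'_antitone.le_of_tendsto (tendsto_stirlingSeq_sqrt_pi.comp (Filter.tendsto_add_atTop_nat 1)) n

lemma pi_le_sq (n : ℕ) : Real.pi ≤ stirlingSeq (n+1) ^ 2 := by
  have h := sqrtpi_le n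
  nlinarith [Real.sq_sqrt Real.pi_pos.le, Real.sqrt_nonneg Real.pi]

lemma stirlingSeq_two : stirlingSeq 2 = Real.exp 1 ^ 2 / 4 := by
  rw [stirlingSeq]
  norm_num
  rw [show Real.exp 2 = Real.exp 1 ^ 2 by rw [← Real.exp_nat_mul]; norm_num]
  field_simp
  ring

lemma stirling_sq_one : stirlingSeq 1 ^ 2 = Real.exp 1 ^ 2 / 2 := by
  rw [stirlingSeq_one, div_pow, Real.sq_sqrt (by norm_num : (0:ℝ) ≤ 2)]

lemma stirling_pos (j : ℕ) (hj : 1 ≤ j) : 0 < stirlingSeq j := by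
  obtain ⟨i, rfl⟩ : ∃ i, j = i + 1 := ⟨j - 1, by omega⟩
  exact stirlingSeq'_pos i

lemma exp_one_sq_le : Real.exp 1 ^ 2 ≤ 7.38906 := by
  have hE := Real.exp_one_lt_d9
  have hE0 := Real.exp_pos 1
  nlinarith

lemma stirling_sq_le_one : stirlingSeq 1 ^ 2 ≤ 3.69453 := by
  rw [stirling_sq_one]; linarith [exp_one_sq_le]

lemma stirling_sq_le_two (j : ℕ) (hj : 2 ≤ j) : stirlingSeq j ^ 2 ≤ 3.41342 := by
  have h1 : stirlingSeq j ≤ Real.exp 1 ^ 2 / 4 := by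
    obtain ⟨i, rfl⟩ : ∃ i, j = i + 1 := ⟨j - 1, by omega⟩
    calc stirlingSeq (i+1) ≤ stirlingSeq (1+1) := stirlingSeq'_antitone (by omega)
      _ = _ := stirlingSeq_two
  have h2 := (stirling_pos j (by omega)).le
  have h3 := exp_one_sq_le
  have hE0 := Real.exp_pos 1
  nlinarith

-- purely numeric helpers
lemma num_b1 (s t u J : ℝ) (hs0 : 0 ≤ s) (ht0 : 0 ≤ t) (hs : s ≤ 3.69453) (ht : t ≤ 3.41342)
    (hu : 3.141592 ≤ u) (hJ : 2 ≤ J) : s*t*J ≤ u*(1+J)^2 := by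
  have h1 : s*t ≤ 12.612 := by nlinarith
  have h2 : s*t*J ≤ 12.612*J := by nlinarith
  nlinarith [sq_nonneg (J - 2)]

lemma num_b2 (s t u K J : ℝ) (hs0 : 0 ≤ s) (ht0 : 0 ≤ t) (hs : s ≤ 3.41342) (ht : t ≤ 3.41342)
    (hu : 3.141592 ≤ u) (hK : 2 ≤ K) (hJ : 2 ≤ J) : s*t*(K*J) ≤ u*(K+J)^2 := by
  have h1 : s*t ≤ 11.6515 := by nlinarith
  have h2 : s*t*(K*J) ≤ 11.6515*(K*J) := by nlinarith [mul_pos (lt_of_lt_of_le two_pos hK) (lt_of_lt_of_le two_pos hJ)]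
  nlinarith [sq_nonneg (K - J), mul_pos (lt_of_lt_of_le two_pos hK) (lt_of_lt_of_le two_pos hJ)]

-- the key ratio inequality
lemma stirling_ratio (k j : ℕ) (hk : 1 ≤ k) (hj : 1 ≤ j) :
    stirlingSeq k * stirlingSeq j * Real.sqrt ((k:ℝ)*j) ≤ stirlingSeq (k+j) * ((k:ℝ)+j) := by
  have hπ := Real.pi_gt_d6
  have hk0 : (0:ℝ) < k := by exact_mod_cast hk
  have hj0 : (0:ℝ) < j := by exact_mod_cast hj
  have hsn2 : Real.pi ≤ stirlingSeq (k+j) ^ 2 := by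
    obtain ⟨i, hi⟩ : ∃ i, k + j = i + 1 := ⟨k + j - 1, by omega⟩
    rw [hi]; exact pi_le_sq i
  have hsn0 : 0 ≤ stirlingSeq (k+j) := (stirling_pos _ (by omega)).le
  have hsk0 : 0 < stirlingSeq k := stirling_pos _ hk
  have hsj0 : 0 < stirlingSeq j := stirling_pos _ hj
  have hkj : Real.sqrt ((k:ℝ)*j) ^ 2 = (k:ℝ) * j := Real.sq_sqrt (by positivity)
  apply le_of_sq (by positivity) (by positivity)
  rw [mul_pow, mul_pow, hkj, mul_pow]
  have hn2 : Real.pi * ((k:ℝ)+j)^2 ≤ stirlingSeq (k+j)^2 * ((k:ℝ)+j)^2 := by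
    nlinarith [sq_nonneg ((k:ℝ)+j)]
  -- now: sk^2 * sj^2 * (k*j) ≤ sn^2 * (k+j)^2
  rcases Nat.lt_or_ge k 2 with hk2 | hk2
  · obtain rfl : k = 1 := by omega
    rcases Nat.lt_or_ge j 2 with hj2 | hj2
    · obtain rfl : j = 1 := by omega
      rw [stirling_sq_one, show (1+1 : ℕ) = 2 from rfl, stirlingSeq_two]
      have hE0 := Real.exp_pos 1
      norm_num
      rw [div_pow]
      nlinarith
    · have step1 : stirlingSeq 1 ^2 * stirlingSeq j ^2 * ((j:ℝ)) ≤ Real.pi * (1+(j:ℝ))^2 :=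
        num_b1 _ _ _ _ (sq_nonneg _) (sq_nonneg _) stirling_sq_le_one (stirling_sq_le_two j hj2)
          hπ.le (by exact_mod_cast hj2)
      calc stirlingSeq 1 ^2 * stirlingSeq j^2 * (((1:ℕ):ℝ)*j) = stirlingSeq 1 ^2 * stirlingSeq j ^2 * ((j:ℝ)) := by
            push_cast; ring
        _ ≤ Real.pi * (1+(j:ℝ))^2 := step1
        _ = Real.pi * (((1:ℕ):ℝ)+j)^2 := by push_cast; ring
        _ ≤ _ := hn2
  · rcases Nat.lt_or_ge j 2 with hj2 | hj2
    · obtain rfl : j = 1 := by omega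
      have step1 : stirlingSeq 1 ^2 * stirlingSeq k ^2 * ((k:ℝ)) ≤ Real.pi * (1+(k:ℝ))^2 :=
        num_b1 _ _ _ _ (sq_nonneg _) (sq_nonneg _) stirling_sq_le_one (stirling_sq_le_two k hk2)
          hπ.le (by exact_mod_cast hk2)
      calc stirlingSeq k ^2 * stirlingSeq 1 ^2 * ((k:ℝ)*((1:ℕ):ℝ)) = stirlingSeq 1 ^2 * stirlingSeq k ^2 * ((k:ℝ)) := by
            push_cast; ring
        _ ≤ Real.pi * (1+(k:ℝ))^2 := step1
        _ = Real.pi * ((k:ℝ)+((1:ℕ):ℝ))^2 := by push_cast; ring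
        _ ≤ _ := hn2
    · have step1 : stirlingSeq k ^2 * stirlingSeq j ^2 * ((k:ℝ)*j) ≤ Real.pi * ((k:ℝ)+(j:ℝ))^2 :=
        num_b2 _ _ _ _ _ (sq_nonneg _) (sq_nonneg _) (stirling_sq_le_two k hk2) (stirling_sq_le_two j hj2)
          hπ.le (by exact_mod_cast hk2) (by exact_mod_cast hj2)
      exact le_trans step1 hn2


lemma fact_mul_exp (k : ℕ) (hk : 1 ≤ k) :
    (k ! : ℝ) * (Real.exp 1)^k = stirlingSeq k * Real.sqrt (2*k) * (k:ℝ)^k := by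
  have hk0 : (0:ℝ) < k := by exact_mod_cast hk
  have hs : (0:ℝ) < Real.sqrt (2*k) := Real.sqrt_pos.2 (by positivity)
  rw [stirlingSeq, div_pow]
  field_simp

lemma sqrt_two_mul_mul (k j : ℕ) :
    Real.sqrt (2*(k:ℝ)) * Real.sqrt (2*(j:ℝ)) = 2 * Real.sqrt ((k:ℝ)*j) := by
  rw [← Real.sqrt_mul (by positivity), show 2*(k:ℝ)*(2*(j:ℝ)) = 2^2*((k:ℝ)*j) by ring,
    Real.sqrt_mul (by positivity), Real.sqrt_sq (by norm_num)]

lemma fact_ineq (k j : ℕ) (hk : 1 ≤ k) (hj : 1 ≤ j) :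
    ((k+j:ℕ):ℝ)^(k+j) * (k ! : ℝ) * (j ! : ℝ) ≤
      Real.sqrt (2*((k+j:ℕ):ℝ)) * ((k+j)! : ℝ) * (k:ℝ)^k * (j:ℝ)^j := by
  set n := k + j with hn
  have hn1 : 1 ≤ n := by omega
  have hE0 := Real.exp_pos 1
  have hcast : ((n:ℕ):ℝ) = (k:ℝ) + j := by rw [hn]; exact Nat.cast_add k j
  have key := stirling_ratio k j hk hj
  have hposf : (0:ℝ) ≤ ((n:ℕ):ℝ)^n * (k:ℝ)^k * (j:ℝ)^j := by positivity
  have H : (((n:ℕ):ℝ)^n * (k !:ℝ) * (j !:ℝ)) * (Real.exp 1)^n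
      ≤ (Real.sqrt (2*((n:ℕ):ℝ)) * ((n)! : ℝ) * (k:ℝ)^k * (j:ℝ)^j) * (Real.exp 1)^n := by
    calc (((n:ℕ):ℝ)^n * (k !:ℝ) * (j !:ℝ)) * (Real.exp 1)^n
        = ((n:ℕ):ℝ)^n * ((k !:ℝ) * (Real.exp 1)^k) * ((j !:ℝ) * (Real.exp 1)^j) := by
          rw [hn, pow_add]; ring
      _ = ((n:ℕ):ℝ)^n * (stirlingSeq k * Real.sqrt (2*k) * (k:ℝ)^k)
            * (stirlingSeq j * Real.sqrt (2*j) * (j:ℝ)^j) := by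
          rw [fact_mul_exp k hk, fact_mul_exp j hj]
      _ = (stirlingSeq k * stirlingSeq j * (Real.sqrt (2*(k:ℝ)) * Real.sqrt (2*(j:ℝ))))
            * (((n:ℕ):ℝ)^n * (k:ℝ)^k * (j:ℝ)^j) := by push_cast; ring
      _ = (stirlingSeq k * stirlingSeq j * Real.sqrt ((k:ℝ)*j)) * 2
            * (((n:ℕ):ℝ)^n * (k:ℝ)^k * (j:ℝ)^j) := by rw [sqrt_two_mul_mul]; ring
      _ ≤ (stirlingSeq n * ((k:ℝ)+j)) * 2 * (((n:ℕ):ℝ)^n * (k:ℝ)^k * (j:ℝ)^j) := by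
          apply mul_le_mul_of_nonneg_right _ hposf
          have : stirlingSeq k * stirlingSeq j * Real.sqrt ((k:ℝ)*j) ≤ stirlingSeq n * ((k:ℝ)+j) := key
          linarith
      _ = stirlingSeq n * (2*((n:ℕ):ℝ)) * (((n:ℕ):ℝ)^n * (k:ℝ)^k * (j:ℝ)^j) := by
          rw [hcast]; ring
      _ = stirlingSeq n * (Real.sqrt (2*((n:ℕ):ℝ)) * Real.sqrt (2*((n:ℕ):ℝ)))
            * (((n:ℕ):ℝ)^n * (k:ℝ)^k * (j:ℝ)^j) := by
          rw [Real.mul_self_sqrt (by positivity)]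
      _ = Real.sqrt (2*((n:ℕ):ℝ)) * (stirlingSeq n * Real.sqrt (2*((n:ℕ):ℝ)) * ((n:ℕ):ℝ)^n)
            * ((k:ℝ)^k * (j:ℝ)^j) := by ring
      _ = Real.sqrt (2*((n:ℕ):ℝ)) * (((n)! : ℝ) * (Real.exp 1)^n) * ((k:ℝ)^k * (j:ℝ)^j) := by
          rw [fact_mul_exp n hn1]
      _ = (Real.sqrt (2*((n:ℕ):ℝ)) * ((n)! : ℝ) * (k:ℝ)^k * (j:ℝ)^j) * (Real.exp 1)^n := by ring
  exact le_of_mul_le_mul_right H (pow_pos hE0 n)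

lemma choose_lower (n k : ℕ) (hn : 1 ≤ n) (hk : k ≤ n) :
    ((n:ℕ):ℝ)^n ≤ Real.sqrt (2*(n:ℝ)) * (n.choose k : ℝ) * (k:ℝ)^k * (((n-k:ℕ)):ℝ)^(n-k) := by
  have h1 : (1:ℝ) ≤ Real.sqrt (2*(n:ℝ)) := by
    rw [show (1:ℝ) = Real.sqrt 1 by simp]
    apply Real.sqrt_le_sqrt
    have : (1:ℝ) ≤ n := by exact_mod_cast hn
    linarith
  have hnn : (0:ℝ) < ((n:ℕ):ℝ)^n := by positivity
  rcases Nat.eq_zero_or_pos k with rfl | hk1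
  · simp only [Nat.choose_zero_right, Nat.cast_one, pow_zero, Nat.sub_zero]
    nlinarith
  rcases Nat.eq_or_lt_of_le hk with rfl | hkn
  · simp only [Nat.choose_self, Nat.cast_one, Nat.sub_self, pow_zero]
    nlinarith
  · set j := n - k with hj
    have hj1 : 1 ≤ j := by omega
    have hkj : k + j = n := by omega
    have hfi := fact_ineq k j hk1 hj1
    rw [hkj] at hfi
    have hkj0 : (0:ℝ) < (k ! : ℝ) * (j ! : ℝ) := by positivity
    rw [Nat.cast_choose ℝ hk]
    rw [show Real.sqrt (2*(n:ℝ)) * ((n ! : ℝ)/((k !:ℝ) * ((n-k)!:ℝ))) * (k:ℝ)^k * ((j:ℕ):ℝ)^j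
        = (Real.sqrt (2*(n:ℝ)) * (n ! :ℝ) * (k:ℝ)^k * ((j:ℕ):ℝ)^j)/((k !:ℝ) * ((j:ℕ)!:ℝ)) by rw [← hj]; ring]
    rw [le_div_iff₀ hkj0]
    calc ((n:ℕ):ℝ)^n * ((k !:ℝ) * ((j !:ℝ))) = ((n:ℕ):ℝ)^n * (k !:ℝ) * (j !:ℝ) := by ring
      _ ≤ _ := hfi
      _ = _ := by ring


lemma binom_sum_xy (n : ℕ) (x y : ℝ) :
    ∑ k ∈ range (n+1), (n.choose k : ℝ) * x^k * y^(n-k) = (x+y)^n := by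
  rw [add_pow]
  exact Finset.sum_congr rfl (fun k _ => by ring)

lemma binom_mean_xy (n : ℕ) (x y : ℝ) :
    ∑ k ∈ range (n+1), (k:ℝ) * ((n.choose k : ℝ) * x^k * y^(n-k)) = n*x*(x+y)^(n-1) := by
  cases n with
  | zero => simp
  | succ m =>
    rw [Finset.sum_range_succ']
    simp only [Nat.cast_zero, zero_mul, add_zero, Nat.succ_sub_one]
    calc ∑ i ∈ range (m+1), ((i+1:ℕ):ℝ) * (((m+1).choose (i+1) : ℝ) * x^(i+1) * y^(m+1-(i+1)))
        = ∑ i ∈ range (m+1), ((m+1:ℕ):ℝ)*x * ((m.choose i : ℝ) * x^i * y^(m-i)) := by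
          apply Finset.sum_congr rfl
          intro i _
          have h : ((i+1) * ((m+1).choose (i+1)) : ℕ) = (m+1) * m.choose i := by
            rw [mul_comm (i+1), Nat.add_one_mul_choose_eq m i]
          have hc : ((i:ℝ)+1) * (((m+1).choose (i+1) : ℝ)) = ((m:ℝ)+1) * (m.choose i : ℝ) := by
            exact_mod_cast congrArg (Nat.cast : ℕ → ℝ) h
          have hsub : m + 1 - (i+1) = m - i := by omega
          rw [hsub]
          push_cast
          linear_combination (x^(i+1) * y^(m-i)) * hc
      _ = ((m+1:ℕ):ℝ)*x * ∑ i ∈ range (m+1), ((m.choose i : ℝ) * x^i * y^(m-i)) := by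
          rw [Finset.mul_sum]
      _ = _ := by rw [binom_sum_xy]; try push_cast; try ring_nf
lemma binom_fac2_xy (n : ℕ) (x y : ℝ) :
    ∑ k ∈ range (n+1), (k:ℝ)*((k:ℝ)-1) * ((n.choose k : ℝ) * x^k * y^(n-k))
      = n*((n:ℝ)-1)*x^2*(x+y)^(n-2) := by
  cases n with
  | zero => simp
  | succ m =>
    rw [Finset.sum_range_succ']
    simp only [Nat.cast_zero, zero_mul, add_zero, mul_zero]
    calc ∑ i ∈ range (m+1), ((i+1:ℕ):ℝ)*(((i+1:ℕ):ℝ)-1) * (((m+1).choose (i+1) : ℝ) * x^(i+1) * y^(m+1-(i+1)))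
        = ∑ i ∈ range (m+1), ((m+1:ℕ):ℝ)*x * ((i:ℝ) * ((m.choose i : ℝ) * x^i * y^(m-i))) := by
          apply Finset.sum_congr rfl
          intro i _
          have h : ((i+1) * ((m+1).choose (i+1)) : ℕ) = (m+1) * m.choose i := by
            rw [mul_comm (i+1), Nat.add_one_mul_choose_eq m i]
          have hc : ((i:ℝ)+1) * (((m+1).choose (i+1) : ℝ)) = ((m:ℝ)+1) * (m.choose i : ℝ) := by
            exact_mod_cast congrArg (Nat.cast : ℕ → ℝ) h
          have hsub : m + 1 - (i+1) = m - i := by omega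
          rw [hsub]
          push_cast
          linear_combination (x^(i+1) * y^(m-i) * (i:ℝ)) * hc
      _ = ((m+1:ℕ):ℝ)*x * ∑ i ∈ range (m+1), ((i:ℝ) * ((m.choose i : ℝ) * x^i * y^(m-i))) := by
          rw [Finset.mul_sum]
      _ = _ := by rw [binom_mean_xy]; try push_cast; try ring_nf


lemma hoeffding_bernoulli (q t : ℝ) (hq0 : 0 ≤ q) (hq1 : q ≤ 1) (ht : 0 ≤ t) :
    1 - q + q*Real.exp t ≤ Real.exp (q*t + t^2/8) := by
  have hu : ∀ s : ℝ, 0 < 1 - q + q*Real.exp s := by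
    intro s
    rcases eq_or_lt_of_le hq1 with rfl | hq1'
    · simpa using Real.exp_pos s
    · have := Real.exp_pos s
      nlinarith
  -- derivative framework
  set g1 : ℝ → ℝ := fun s => q + s/4 - q*Real.exp s/(1 - q + q*Real.exp s) with hg1def
  have hg1deriv : ∀ s : ℝ, HasDerivAt g1
      (1/4 - (q*Real.exp s*(1-q))/(1 - q + q*Real.exp s)^2) s := by
    intro s
    have h1 : HasDerivAt (fun s : ℝ => q + s/4) (1/4) s := by
      simpa using ((hasDerivAt_id s).div_const 4).const_add q
    have h2 : HasDerivAt (fun s : ℝ => q*Real.exp s) (q*Real.exp s) s :=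
      (Real.hasDerivAt_exp s).const_mul q
    have h3 : HasDerivAt (fun s : ℝ => 1 - q + q*Real.exp s) (q*Real.exp s) s :=
      h2.const_add (1-q)
    have h4 := h2.div h3 (hu s).ne'
    have h5 := h1.sub h4
    refine h5.congr_deriv ?_
    field_simp
    ring
  have hg1mono : Monotone g1 := by
    apply monotone_of_deriv_nonneg
    · intro s
      exact (hg1deriv s).differentiableAt
    · intro s
      rw [(hg1deriv s).deriv]
      have h := hu s
      have hsq : 0 ≤ ((1-q) - q*Real.exp s)^2 := sq_nonneg _
      have : q*Real.exp s*(1-q)/(1 - q + q*Real.exp s)^2 ≤ 1/4 := by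
        rw [div_le_iff₀ (by positivity)]
        nlinarith
      linarith
  have hg10 : g1 0 = 0 := by
    rw [hg1def]
    simp
  have hg1nonneg : ∀ s : ℝ, 0 ≤ s → 0 ≤ g1 s := by
    intro s hs
    rw [← hg10]
    exact hg1mono hs
  -- g
  set g : ℝ → ℝ := fun s => q*s + s^2/8 - Real.log (1 - q + q*Real.exp s) with hgdef
  have hgderiv : ∀ s : ℝ, HasDerivAt g (g1 s) s := by
    intro s
    have h2 : HasDerivAt (fun s : ℝ => 1 - q + q*Real.exp s) (q*Real.exp s) s :=
      ((Real.hasDerivAt_exp s).const_mul q).const_add (1-q)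
    have h3 := h2.log (hu s).ne'
    have h1 : HasDerivAt (fun s : ℝ => q*s + s^2/8) (q + 2*s/8) s := by
      have ha := (hasDerivAt_id s).const_mul q
      have hb := ((hasDerivAt_pow 2 s).div_const 8)
      refine (ha.add hb).congr_deriv ?_
      simp
    have h5 := h1.sub h3
    refine h5.congr_deriv ?_
    rw [hg1def]
    ring
  have hgmono : MonotoneOn g (Set.Ici 0) := by
    apply monotoneOn_of_deriv_nonneg (convex_Ici 0)
    · exact Continuous.continuousOn (continuous_iff_continuousAt.2
        (fun s => (hgderiv s).differentiableAt.continuousAt))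
    · intro s _
      exact (hgderiv s).differentiableAt.differentiableWithinAt
    · intro s hs
      rw [(hgderiv s).deriv]
      rw [interior_Ici, Set.mem_Ioi] at hs
      exact hg1nonneg s hs.le
  have hg0 : g 0 = 0 := by
    rw [hgdef]; simp
  have hgt : 0 ≤ g t := by
    rw [← hg0]
    exact hgmono (Set.self_mem_Ici) (Set.mem_Ici.2 ht) ht
  have hlog : Real.log (1 - q + q*Real.exp t) ≤ q*t + t^2/8 := by
    rw [hgdef] at hgt
    simp only at hgt
    linarith
  calc 1 - q + q*Real.exp t = Real.exp (Real.log (1 - q + q*Real.exp t)) :=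
        (Real.exp_log (hu t)).symm
    _ ≤ Real.exp (q*t + t^2/8) := Real.exp_le_exp.2 hlog


lemma key_PS (n k : ℕ) (q : ℝ) (hq0 : 0 < q) (hq1 : q < 1) (hk1 : 1 ≤ k) (hkn : k ≤ n) :
    1 ≤ Real.sqrt (2*(n:ℝ)) * ((n.choose k : ℝ) * q^k * (1-q)^(n-k))
        * (((k:ℝ)/n)^2/q + (1-(k:ℝ)/n)^2/(1-q))^n := by
  obtain ⟨j, rfl⟩ : ∃ j, n = k + j := ⟨n - k, by omega⟩
  have hcl := choose_lower (k+j) k (by omega) (by omega)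
  rw [show k + j - k = j by omega] at hcl ⊢
  have hn0 : (0:ℝ) < ((k+j:ℕ):ℝ) := by exact_mod_cast Nat.lt_of_lt_of_le hk1 (by omega)
  have hk0 : (0:ℝ) < k := by exact_mod_cast hk1
  have hj0 : (0:ℝ) ≤ j := by positivity
  have h1q : (0:ℝ) < 1 - q := by linarith
  set a : ℝ := (k:ℝ)/((k+j:ℕ):ℝ) with ha
  have ha0 : 0 < a := by positivity
  have ha1 : a ≤ 1 := by
    rw [ha, div_le_one hn0]; exact_mod_cast by omega
  set x : ℝ := a/q with hx
  set y : ℝ := (1-a)/(1-q) with hy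
  have hx0 : 0 ≤ x := by positivity
  have hy0 : 0 ≤ y := div_nonneg (by linarith) h1q.le
  have hpow0 : (0:ℝ) < ((k+j:ℕ):ℝ)^(k+j) := by positivity
  -- step 1
  have hP1 : 1 ≤ Real.sqrt (2*((k+j:ℕ):ℝ)) * (((k+j).choose k : ℝ) * q^k * (1-q)^j)
      * (x^k * y^j) := by
    calc (1:ℝ) = ((k+j:ℕ):ℝ)^(k+j) / ((k+j:ℕ):ℝ)^(k+j) := (div_self hpow0.ne').symm
      _ ≤ (Real.sqrt (2*((k+j:ℕ):ℝ)) * ((k+j).choose k : ℝ) * (k:ℝ)^k * (j:ℝ)^j)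
            / ((k+j:ℕ):ℝ)^(k+j) := by
          gcongr
      _ = Real.sqrt (2*((k+j:ℕ):ℝ)) * (((k+j).choose k : ℝ) * q^k * (1-q)^j) * (x^k * y^j) := by
          have hc : ((k+j:ℕ):ℝ) = (k:ℝ) + j := by push_cast; ring
          have h1a : 1 - a = (j:ℝ)/((k+j:ℕ):ℝ) := by
            rw [ha, hc]; field_simp; ring
          have hE : x^k * y^j = ((k:ℝ)^k*(j:ℝ)^j)
              / ((((k+j:ℕ)):ℝ)^k * (((k+j:ℕ)):ℝ)^j * q^k * (1-q)^j) := by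
            rw [hx, hy, div_pow, div_pow, ha, h1a, div_pow, div_pow]
            field_simp
          rw [hE, pow_add]
          field_simp
  -- step 2 : GM
  set S : ℝ := a^2/q + (1-a)^2/(1-q) with hS
  have hGM : x ^ (a:ℝ) * y ^ ((1:ℝ)-a) ≤ S := by
    have h := Real.geom_mean_le_arith_mean2_weighted ha0.le (by linarith : (0:ℝ) ≤ 1-a) hx0 hy0
      (by ring : a + (1-a) = 1)
    calc x ^ (a:ℝ) * y ^ ((1:ℝ)-a) ≤ a*x + (1-a)*y := h
      _ = S := by rw [hS, hx, hy]; field_simp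
  have hprod0 : 0 ≤ x ^ (a:ℝ) * y ^ ((1:ℝ)-a) :=
    mul_nonneg (Real.rpow_nonneg hx0 _) (Real.rpow_nonneg hy0 _)
  have hP2 : x^k * y^j ≤ S^(k+j) := by
    have hxa : (x ^ (a:ℝ))^(k+j) = x^k := by
      rw [← Real.rpow_natCast (x ^ (a:ℝ)) (k+j), ← Real.rpow_mul hx0,
        show a*((k+j:ℕ):ℝ) = ((k:ℕ):ℝ) by rw [ha]; field_simp, Real.rpow_natCast]
    have hya : (y ^ ((1:ℝ)-a))^(k+j) = y^j := by
      rw [← Real.rpow_natCast (y ^ ((1:ℝ)-a)) (k+j), ← Real.rpow_mul hy0,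
        show (1-a)*((k+j:ℕ):ℝ) = ((j:ℕ):ℝ) by rw [ha]; field_simp <;> (try push_cast) <;> (try ring),
        Real.rpow_natCast]
    calc x^k * y^j = (x ^ (a:ℝ) * y ^ ((1:ℝ)-a))^(k+j) := by rw [mul_pow, hxa, hya]
      _ ≤ S^(k+j) := pow_le_pow_left₀ hprod0 hGM _
  -- combine
  have hB0 : 0 ≤ Real.sqrt (2*((k+j:ℕ):ℝ)) * (((k+j).choose k : ℝ) * q^k * (1-q)^j) := by
    positivity
  calc (1:ℝ) ≤ Real.sqrt (2*((k+j:ℕ):ℝ)) * (((k+j).choose k : ℝ) * q^k * (1-q)^j)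
        * (x^k * y^j) := hP1
    _ ≤ Real.sqrt (2*((k+j:ℕ):ℝ)) * (((k+j).choose k : ℝ) * q^k * (1-q)^j) * S^(k+j) :=
        mul_le_mul_of_nonneg_left hP2 hB0
    _ = _ := by rw [hS, ha]


lemma single_term (n k : ℕ) (q : ℝ) (hq0 : 0 < q) (hq1 : q < 1) (hk1 : 1 ≤ k) (hkn : k ≤ n) :
    Real.exp (-(((k:ℝ) - n*q)^2/((n:ℝ)*q*(1-q))))
      ≤ Real.sqrt (2*(n:ℝ)) * ((n.choose k : ℝ) * q^k * (1-q)^(n-k)) := by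
  have hn0 : (0:ℝ) < n := by exact_mod_cast Nat.lt_of_lt_of_le hk1 hkn
  have h1q : (0:ℝ) < 1 - q := by linarith
  have hkey := key_PS n k q hq0 hq1 hk1 hkn
  set u : ℝ := ((k:ℝ)/n - q)^2/(q*(1-q)) with hu
  have hu0 : 0 ≤ u := by positivity
  have hSeq : ((k:ℝ)/n)^2/q + (1-(k:ℝ)/n)^2/(1-q) = 1 + u := by
    rw [hu]; field_simp; ring
  have hSexp : (1+u)^n ≤ Real.exp ((n:ℝ)*u) := by
    calc (1+u)^n ≤ (Real.exp u)^n := by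
          apply pow_le_pow_left₀ (by linarith)
          linarith [Real.add_one_le_exp u]
      _ = Real.exp ((n:ℝ)*u) := by rw [← Real.exp_nat_mul]
  have hnu : (n:ℝ)*u = ((k:ℝ) - n*q)^2/((n:ℝ)*q*(1-q)) := by
    rw [hu]; field_simp
  have hB0 : 0 ≤ Real.sqrt (2*(n:ℝ)) * ((n.choose k : ℝ) * q^k * (1-q)^(n-k)) := by positivity
  have h2 : 1 ≤ Real.sqrt (2*(n:ℝ)) * ((n.choose k : ℝ) * q^k * (1-q)^(n-k))
      * Real.exp (((k:ℝ) - n*q)^2/((n:ℝ)*q*(1-q))) := by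
    calc (1:ℝ) ≤ Real.sqrt (2*(n:ℝ)) * ((n.choose k : ℝ) * q^k * (1-q)^(n-k))
          * (((k:ℝ)/n)^2/q + (1-(k:ℝ)/n)^2/(1-q))^n := hkey
      _ = Real.sqrt (2*(n:ℝ)) * ((n.choose k : ℝ) * q^k * (1-q)^(n-k)) * (1+u)^n := by
          rw [hSeq]
      _ ≤ Real.sqrt (2*(n:ℝ)) * ((n.choose k : ℝ) * q^k * (1-q)^(n-k))
          * Real.exp ((n:ℝ)*u) := mul_le_mul_of_nonneg_left hSexp hB0
      _ = _ := by rw [hnu]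
  rw [Real.exp_neg]
  rw [inv_le_iff_one_le_mul₀ (Real.exp_pos _)]
  linarith [h2]


lemma binom_sum_one (n : ℕ) (q : ℝ) :
    ∑ k ∈ range (n+1), (n.choose k : ℝ) * q^k * (1-q)^(n-k) = 1 := by
  rw [binom_sum_xy, show q + (1-q) = 1 by ring, one_pow]

lemma binom_sq_sum (n : ℕ) (q : ℝ) (c : ℝ) :
    ∑ k ∈ range (n+1), (c - (k:ℝ))^2 * ((n.choose k : ℝ) * q^k * (1-q)^(n-k))
      = (n:ℝ)*q*(1-q) + (c - n*q)^2 := by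
  have h0 := binom_sum_one n q
  have h1 := binom_mean_xy n q (1-q)
  have h2 := binom_fac2_xy n q (1-q)
  rw [show q + (1-q) = 1 by ring, one_pow, mul_one] at h1 h2
  have hsplit : ∀ k ∈ range (n+1), (c - (k:ℝ))^2 * ((n.choose k : ℝ) * q^k * (1-q)^(n-k))
      = c^2 * ((n.choose k : ℝ) * q^k * (1-q)^(n-k))
        - (2*c - 1) * ((k:ℝ) * ((n.choose k : ℝ) * q^k * (1-q)^(n-k)))
        + (k:ℝ)*((k:ℝ)-1) * ((n.choose k : ℝ) * q^k * (1-q)^(n-k)) := by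
    intro k _; ring
  rw [Finset.sum_congr rfl hsplit]
  rw [Finset.sum_add_distrib, Finset.sum_sub_distrib, ← Finset.mul_sum, ← Finset.mul_sum]
  rw [h0, h1, h2]
  ring

lemma cantelli (n : ℕ) (q : ℝ) (hn : 1 ≤ n) (hq0 : 0 < q) (hq1 : q < 1) (m : ℕ)
    (hm : (m:ℝ) ≤ n*q) :
    ∑ k ∈ range m, ((n.choose k : ℝ) * q^k * (1-q)^(n-k))
      ≤ ((n:ℝ)*q*(1-q))/((n:ℝ)*q*(1-q) + ((n:ℝ)*q - m + 1)^2) := by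
  have hn0 : (0:ℝ) < n := by exact_mod_cast hn
  set V : ℝ := (n:ℝ)*q*(1-q) with hV
  have hV0 : 0 < V := by rw [hV]; have : (0:ℝ) < 1 - q := by linarith
                         positivity
  set d : ℝ := (n:ℝ)*q - m + 1 with hd
  have hd1 : 1 ≤ d := by rw [hd]; linarith
  have hd0 : 0 < d := by linarith
  set s : ℝ := V/d with hs
  have hs0 : 0 ≤ s := by positivity
  have hmn : m ≤ n + 1 := by
    by_contra h
    push_neg at h
    have : (n:ℝ) + 1 < m := by exact_mod_cast h
    nlinarith
  have hterm : ∀ k ∈ range m, ((n.choose k : ℝ) * q^k * (1-q)^(n-k))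
      ≤ (((n:ℝ)*q + s - k)/(d+s))^2 * ((n.choose k : ℝ) * q^k * (1-q)^(n-k)) := by
    intro k hk
    have hk' : (k:ℝ) ≤ (m:ℝ) - 1 := by
      have := Finset.mem_range.1 hk
      have : (k:ℝ) + 1 ≤ m := by exact_mod_cast this
      linarith
    have hnum : d + s ≤ (n:ℝ)*q + s - k := by rw [hd]; linarith
    have hratio : 1 ≤ ((n:ℝ)*q + s - k)/(d+s) := by
      rw [le_div_iff₀ (by linarith)]; linarith
    have hB0 : 0 ≤ ((n.choose k : ℝ) * q^k * (1-q)^(n-k)) := by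
      have : (0:ℝ) < 1 - q := by linarith
      positivity
    have h1r : 1 ≤ (((n:ℝ)*q + s - k)/(d+s))^2 := by nlinarith [hratio]
    have := mul_le_mul_of_nonneg_right h1r hB0
    linarith
  calc ∑ k ∈ range m, ((n.choose k : ℝ) * q^k * (1-q)^(n-k))
      ≤ ∑ k ∈ range m, (((n:ℝ)*q + s - k)/(d+s))^2 * ((n.choose k : ℝ) * q^k * (1-q)^(n-k)) :=
        Finset.sum_le_sum hterm
    _ ≤ ∑ k ∈ range (n+1), (((n:ℝ)*q + s - k)/(d+s))^2 * ((n.choose k : ℝ) * q^k * (1-q)^(n-k)) := by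
        apply Finset.sum_le_sum_of_subset_of_nonneg
        · exact Finset.range_subset_range.2 hmn
        · intro k _ _
          have : (0:ℝ) < 1 - q := by linarith
          positivity
    _ = (∑ k ∈ range (n+1), ((n:ℝ)*q + s - (k:ℝ))^2 * ((n.choose k : ℝ) * q^k * (1-q)^(n-k)))
          / (d+s)^2 := by
        rw [Finset.sum_div]
        apply Finset.sum_congr rfl
        intro k _
        rw [div_pow]
        ring
    _ = (V + s^2)/(d+s)^2 := by rw [binom_sq_sum n q ((n:ℝ)*q + s), hV]; ring
    _ = V/(V + d^2) := by
        rw [hs]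
        field_simp
        ring
lemma tail_eq (n m : ℕ) (q : ℝ) (hmn : m ≤ n + 1) :
    ∑ k ∈ Icc m n, ((n.choose k : ℝ) * q^k * (1-q)^(n-k))
      = 1 - ∑ k ∈ range m, ((n.choose k : ℝ) * q^k * (1-q)^(n-k)) := by
  have h := Finset.sum_range_add_sum_Ico (fun k => ((n.choose k : ℝ) * q^k * (1-q)^(n-k))) hmn
  rw [binom_sum_one] at h
  rw [← Finset.Ico_add_one_right_eq_Icc]
  linarith


set_option maxHeartbeats 1000000 in
lemma median_sur (n : ℕ) (q : ℝ) (hn : 1 ≤ n) (hq0 : 0 < q) (hq1 : q < 1) (m : ℕ)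
    (hm : (m:ℝ) ≤ n*q) :
    1/Real.sqrt (2*(n:ℝ)) ≤ ∑ k ∈ Icc m n, ((n.choose k : ℝ) * q^k * (1-q)^(n-k)) := by
  have hn0 : (0:ℝ) < n := by exact_mod_cast hn
  have h1q : (0:ℝ) < 1 - q := by linarith
  have h2n0 : (0:ℝ) < 2*(n:ℝ) := by linarith
  have hs2n : 0 < Real.sqrt (2*(n:ℝ)) := Real.sqrt_pos.2 h2n0
  set V : ℝ := (n:ℝ)*q*(1-q) with hV
  have hV0 : 0 < V := by positivity
  have hVn : V ≤ (n:ℝ)/4 := by nlinarith [sq_nonneg (2*q-1)]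
  have hmn : m ≤ n + 1 := by
    by_contra h
    push_neg at h
    have : (n:ℝ) + 1 < m := by exact_mod_cast h
    nlinarith
  rcases le_or_gt V 4 with hV4 | hV4
  · -- Cantelli branch
    have hVs : V + 1 ≤ Real.sqrt (2*(n:ℝ)) := by
      apply le_of_sq (by linarith) hs2n.le
      rw [Real.sq_sqrt h2n0.le]
      rcases le_or_gt (n:ℝ) 23 with h23 | h23
      · have hn1 : (1:ℝ) ≤ n := by exact_mod_cast hn
        have e1 : 0 ≤ ((n:ℝ)-1)*(23-(n:ℝ)) := mul_nonneg (by linarith) (by linarith)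
        nlinarith [e1, hVn, hV0]
      · nlinarith
    set d : ℝ := (n:ℝ)*q - m + 1 with hd
    have hd1 : 1 ≤ d := by rw [hd]; linarith
    have hL := cantelli n q hn hq0 hq1 m hm
    rw [tail_eq n m q hmn]
    have key1 : 1/(V+1) ≤ d^2/(V+d^2) := by
      have hd2 : 1 ≤ d^2 := by nlinarith
      rw [div_le_div_iff₀ (by linarith) (by nlinarith)]
      nlinarith [mul_le_mul_of_nonneg_right hd2 hV0.le]
    have key2 : 1/Real.sqrt (2*(n:ℝ)) ≤ 1/(V+1) := by
      apply one_div_le_one_div_of_le (by linarith) hVs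
    have key3 : d^2/(V+d^2) = 1 - V/(V+d^2) := by
      field_simp
      ring
    linarith
  · -- two-term branch
    have hnq0 : (0:ℝ) < n*q := by positivity
    obtain ⟨k₁, hceil, hceil2⟩ : ∃ k₁ : ℕ, (n:ℝ)*q ≤ k₁ ∧ (k₁:ℝ) < n*q + 1 :=
      ⟨⌈(n:ℝ)*q⌉₊, Nat.le_ceil _, Nat.ceil_lt_add_one hnq0.le⟩
    have hk₁1 : 1 ≤ k₁ := by
      rcases Nat.eq_zero_or_pos k₁ with rfl | h
      · simp only [Nat.cast_zero] at hceil; linarith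
      · exact h
    have hnV : (n:ℝ)*q + V ≤ n := by nlinarith
    have hk₂n : k₁ + 1 ≤ n := by
      have : ((k₁ + 1 : ℕ):ℝ) < (n:ℝ) := by push_cast; nlinarith
      exact_mod_cast Nat.le_of_lt_succ (by exact_mod_cast Nat.lt_succ_of_lt (Nat.cast_lt.1 this))
    have hmk₁ : m ≤ k₁ := by
      have : (m:ℝ) ≤ (k₁:ℝ) := le_trans hm hceil
      exact_mod_cast this
    have hsub : ({k₁, k₁+1} : Finset ℕ) ⊆ Icc m n := by
      intro x hx
      simp only [Finset.mem_insert, Finset.mem_singleton] at hx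
      rcases hx with rfl | rfl <;> simp [Finset.mem_Icc] <;> omega
    have htwo : ((n.choose k₁ : ℝ) * q^k₁ * (1-q)^(n-k₁))
          + ((n.choose (k₁+1) : ℝ) * q^(k₁+1) * (1-q)^(n-(k₁+1)))
        ≤ ∑ k ∈ Icc m n, ((n.choose k : ℝ) * q^k * (1-q)^(n-k)) := by
      have hmono := Finset.sum_le_sum_of_subset_of_nonneg hsub
        (fun k _ _ => by positivity :
          ∀ k ∈ Icc m n, k ∉ ({k₁, k₁+1} : Finset ℕ) → (0:ℝ) ≤ (n.choose k : ℝ) * q^k * (1-q)^(n-k))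
      rwa [Finset.sum_pair (by omega : k₁ ≠ k₁ + 1)] at hmono
    have hb₁ := single_term n k₁ q hq0 hq1 hk₁1 (by omega)
    have hb₂ := single_term n (k₁+1) q hq0 hq1 (by omega) hk₂n
    have he₁ : Real.exp (-(1/4 : ℝ)) ≤ Real.exp (-(((k₁:ℝ) - n*q)^2/V)) := by
      apply Real.exp_le_exp.2
      have hz1 : 0 ≤ (k₁:ℝ) - n*q := by linarith
      have hz2 : (k₁:ℝ) - n*q ≤ 1 := by linarith
      have h1 : ((k₁:ℝ) - n*q)^2 ≤ 1 := by
        rw [sq]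
        nlinarith [mul_le_mul hz2 hz2 hz1 (by norm_num : (0:ℝ) ≤ 1)]
      rw [neg_le_neg_iff, div_le_iff₀ hV0]
      linarith
    have he₂ : Real.exp (-(1 : ℝ)) ≤ Real.exp (-((((k₁+1:ℕ):ℝ) - n*q)^2/V)) := by
      apply Real.exp_le_exp.2
      have hz1 : (1:ℝ) ≤ ((k₁+1:ℕ):ℝ) - n*q := by push_cast; linarith
      have hz2 : ((k₁+1:ℕ):ℝ) - n*q ≤ 2 := by push_cast; linarith
      have h1 : (((k₁+1:ℕ):ℝ) - n*q)^2 ≤ 4 := by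
        rw [sq]
        nlinarith [mul_le_mul hz2 hz2 (by linarith : (0:ℝ) ≤ ((k₁+1:ℕ):ℝ) - n*q) (by norm_num : (0:ℝ) ≤ 2)]
      rw [neg_le_neg_iff, div_le_iff₀ hV0]
      linarith
    have hnum : (1:ℝ) ≤ Real.exp (-(1/4:ℝ)) + Real.exp (-(1:ℝ)) := by
      have h1 : (3/4 : ℝ) ≤ Real.exp (-(1/4:ℝ)) := by
        linarith [Real.add_one_le_exp (-(1/4:ℝ))]
      have h2 : (0.36 : ℝ) ≤ Real.exp (-(1:ℝ)) := by
        rw [Real.exp_neg]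
        rw [le_inv_comm₀ (by norm_num) (Real.exp_pos 1)]
        calc Real.exp 1 ≤ 2.7182818286 := Real.exp_one_lt_d9.le
          _ ≤ 0.36⁻¹ := by norm_num
      linarith
    have h12 : 1 ≤ Real.sqrt (2*(n:ℝ)) * (((n.choose k₁ : ℝ) * q^k₁ * (1-q)^(n-k₁))
        + ((n.choose (k₁+1) : ℝ) * q^(k₁+1) * (1-q)^(n-(k₁+1)))) := by
      have c₁ := he₁.trans hb₁
      have c₂ := he₂.trans hb₂
      nlinarith [c₁, c₂, hnum]
    have hfin := mul_le_mul_of_nonneg_left htwo hs2n.le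
    rw [div_le_iff₀ hs2n]
    nlinarith [hfin, h12]


lemma chernoff_strict (n : ℕ) (q : ℝ) (hq0 : 0 < q) (hq1 : q < 1) (m : ℕ)
    (hm1 : 1 ≤ m) (hmn : m ≤ n) (t : ℝ) (ht : 0 ≤ t) :
    ∑ k ∈ Icc m n, ((n.choose k : ℝ) * q^k * (1-q)^(n-k))
      < Real.exp (-(t*m)) * (1 - q + q*Real.exp t)^n := by
  have h1q : (0:ℝ) < 1 - q := by linarith
  have step1 : ∑ k ∈ Icc m n, ((n.choose k : ℝ) * q^k * (1-q)^(n-k))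
      ≤ ∑ k ∈ Icc m n, Real.exp (-(t*m)) * ((n.choose k : ℝ) * (q*Real.exp t)^k * (1-q)^(n-k)) := by
    apply Finset.sum_le_sum
    intro k hk
    have hkm : m ≤ k := (Finset.mem_Icc.1 hk).1
    have h1 : 1 ≤ Real.exp (t*k - t*m) := by
      rw [← Real.exp_zero]
      apply Real.exp_le_exp.2
      have : (m:ℝ) ≤ k := by exact_mod_cast hkm
      nlinarith
    have hrw : Real.exp (-(t*m)) * ((n.choose k : ℝ) * (q*Real.exp t)^k * (1-q)^(n-k))
        = Real.exp (t*k - t*m) * ((n.choose k : ℝ) * q^k * (1-q)^(n-k)) := by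
      rw [mul_pow, ← Real.exp_nat_mul]
      rw [show t*(k:ℝ) - t*m = -(t*m) + (k:ℝ)*t by ring, Real.exp_add]
      ring
    rw [hrw]
    have hc0 : (0:ℝ) < (n.choose k : ℝ) := by
      exact_mod_cast Nat.choose_pos (Finset.mem_Icc.1 hk).2
    nlinarith [h1, mul_pos (mul_pos hc0 (by positivity : (0:ℝ) < q^k)) (by positivity : (0:ℝ) < (1-q)^(n-k))]
  have step2 : ∑ k ∈ Icc m n, ((n.choose k : ℝ) * (q*Real.exp t)^k * (1-q)^(n-k))
      < (q*Real.exp t + (1-q))^n := by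
    rw [← binom_sum_xy n (q*Real.exp t) (1-q)]
    rw [← Finset.Ico_add_one_right_eq_Icc]
    rw [← Finset.sum_range_add_sum_Ico _ (by omega : m ≤ n + 1)]
    have hpos : 0 < ∑ k ∈ range m, ((n.choose k : ℝ) * (q*Real.exp t)^k * (1-q)^(n-k)) := by
      apply Finset.sum_pos'
      · intro k _
        positivity
      · refine ⟨0, Finset.mem_range.2 (by omega), ?_⟩
        have : (n.choose 0 : ℝ) = 1 := by norm_num
        rw [this]
        positivity
    linarith
  calc ∑ k ∈ Icc m n, ((n.choose k : ℝ) * q^k * (1-q)^(n-k))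
      ≤ Real.exp (-(t*m)) * ∑ k ∈ Icc m n, ((n.choose k : ℝ) * (q*Real.exp t)^k * (1-q)^(n-k)) := by
        rw [Finset.mul_sum]
        exact step1
    _ < Real.exp (-(t*m)) * (q*Real.exp t + (1-q))^n := by
        apply (mul_lt_mul_iff_right₀ (Real.exp_pos _)).2 step2
    _ = Real.exp (-(t*m)) * (1 - q + q*Real.exp t)^n := by ring_nf
lemma tail_lt_eps (n : ℕ) (q ε : ℝ) (hq0 : 0 < q) (hq1 : q < 1) (hε0 : 0 < ε) (hε1 : ε < 1)
    (m : ℕ) (hm1 : 1 ≤ m) (hmn : m ≤ n)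
    (hbig : (n:ℝ)*q + Real.sqrt (((n:ℝ)/2) * Real.log (1/ε)) ≤ m) :
    ∑ k ∈ Icc m n, ((n.choose k : ℝ) * q^k * (1-q)^(n-k)) < ε := by
  have hn0 : (0:ℝ) < n := by exact_mod_cast Nat.lt_of_lt_of_le hm1 hmn
  have hlog0 : 0 ≤ Real.log (1/ε) := by
    apply Real.log_nonneg
    rw [le_div_iff₀ hε0]; linarith
  have hsq0 : 0 ≤ Real.sqrt (((n:ℝ)/2) * Real.log (1/ε)) := Real.sqrt_nonneg _
  set D : ℝ := (m:ℝ) - n*q with hD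
  have hD0 : 0 ≤ D := by rw [hD]; linarith
  set t : ℝ := 4*D/n with htdef
  have ht0 : 0 ≤ t := by positivity
  have hch := chernoff_strict n q hq0 hq1 m hm1 hmn t ht0
  have hhb := hoeffding_bernoulli q t hq0.le hq1.le ht0
  have hpow : (1 - q + q*Real.exp t)^n ≤ Real.exp (q*t + t^2/8)^n := by
    apply pow_le_pow_left₀ (by nlinarith [Real.exp_pos t]) hhb
  have hmain : Real.exp (-(t*m)) * (1 - q + q*Real.exp t)^n ≤ Real.exp (-(2*D^2/n)) := by
    calc Real.exp (-(t*m)) * (1 - q + q*Real.exp t)^n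
        ≤ Real.exp (-(t*m)) * Real.exp (q*t + t^2/8)^n := by
          apply mul_le_mul_of_nonneg_left hpow (Real.exp_pos _).le
      _ = Real.exp (-(t*m) + (n:ℝ)*(q*t + t^2/8)) := by
          rw [← Real.exp_nat_mul, ← Real.exp_add]
      _ = Real.exp (-(2*D^2/n)) := by
          congr 1
          rw [htdef, hD]
          field_simp
          ring
  have hfinal : Real.exp (-(2*D^2/n)) ≤ ε := by
    have hD2 : ((n:ℝ)/2) * Real.log (1/ε) ≤ D^2 := by
      have := Real.sq_sqrt (by positivity : (0:ℝ) ≤ ((n:ℝ)/2) * Real.log (1/ε))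
      nlinarith [this, hD0, hsq0, hbig]
    have hexp : -(2*D^2/n) ≤ Real.log ε := by
      rw [show Real.log ε = -Real.log (1/ε) by rw [one_div, Real.log_inv]; ring]
      rw [neg_le_neg_iff, le_div_iff₀ hn0]
      nlinarith [hD2]
    calc Real.exp (-(2*D^2/n)) ≤ Real.exp (Real.log ε) := Real.exp_le_exp.2 hexp
      _ = ε := Real.exp_log hε0
  linarith [hch, hmain, hfinal]


/-- Two-sided bound on the upper truncation threshold `O_max` of the adaptive state
reduction scheme: with `U` the set of occupancies whose binomial upper-tail probability
is below `ε`, `O_max ≥ obar + √((C - obar) obar ((ε√(2C))^{-1/C} - 1))`, and every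
`m` with `obar + √((C/2) ln(1/ε)) < m ≤ C` lies in `U` (hence
`O_max < obar + √((C/2) ln(1/ε)) + 1`). -/
theorem Omax_bounds
    (C : ℕ) (hC : 1 ≤ C) (obar : ℝ) (ho0 : 0 < obar) (hoC : obar < C)
    (q : ℝ) (hq : q = obar / C)
    (ε : ℝ) (hε0 : 0 < ε) (hε1 : ε < 1 / Real.sqrt (2 * C))
    (U : Set ℕ)
    (hU : U = { m : ℕ | m ≤ C ∧
      ∑ m' ∈ Icc m C, (C.choose m' : ℝ) * q ^ m' * (1 - q) ^ (C - m') < ε })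
    (hUne : U.Nonempty)
    (Omax : ℕ) (hOmem : Omax ∈ U) (hOmin : ∀ m ∈ U, Omax ≤ m) :
    (Omax : ℝ) ≥ obar + Real.sqrt ((C - obar) * obar *
        ((ε * Real.sqrt (2 * C)) ^ (-(1 : ℝ) / C) - 1))
    ∧ (∀ m : ℕ, obar + Real.sqrt ((C / 2) * Real.log (1 / ε)) < (m : ℝ) → m ≤ C → m ∈ U)
    ∧ (Omax : ℝ) < obar + Real.sqrt ((C / 2) * Real.log (1 / ε)) + 1 := by
  have hn0 : (0:ℝ) < C := by exact_mod_cast hC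
  have hq0 : 0 < q := by rw [hq]; positivity
  have hq1 : q < 1 := by rw [hq, div_lt_one hn0]; exact hoC
  have hnq : (C:ℝ) * q = obar := by rw [hq]; field_simp
  have h2C0 : (0:ℝ) < 2*(C:ℝ) := by linarith
  have hs2C : 0 < Real.sqrt (2*(C:ℝ)) := Real.sqrt_pos.2 h2C0
  have hs2C1 : 1 < Real.sqrt (2*(C:ℝ)) := by
    rw [show (1:ℝ) = Real.sqrt 1 by simp]
    apply Real.sqrt_lt_sqrt (by norm_num)
    have : (1:ℝ) ≤ C := by exact_mod_cast hC
    linarith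
  have hε1' : ε < 1 := by
    have : 1/Real.sqrt (2*(C:ℝ)) < 1 := by rw [div_lt_one hs2C]; exact hs2C1
    exact hε1.trans this
  rw [hU] at hOmem
  obtain ⟨hOC, hOtail⟩ := hOmem
  -- Part A : obar < Omax
  have hgt : obar < (Omax:ℝ) := by
    by_contra h
    push_neg at h
    have hmed := median_sur C q hC hq0 hq1 Omax (by rw [hnq]; exact h)
    linarith
  have hO1 : 1 ≤ Omax := by
    rcases Nat.eq_zero_or_pos Omax with h0 | h1
    · exfalso; rw [h0] at hgt; simp at hgt; linarith
    · exact h1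
  -- Part (ii)
  have part2 : ∀ m : ℕ, obar + Real.sqrt ((C / 2) * Real.log (1 / ε)) < (m : ℝ) → m ≤ C → m ∈ U := by
    intro m hm hmC
    have hsq0 : 0 ≤ Real.sqrt ((C / 2) * Real.log (1 / ε)) := Real.sqrt_nonneg _
    have hm1 : 1 ≤ m := by
      have hmpos : (0:ℝ) < (m:ℝ) := by linarith
      have : 0 < m := by exact_mod_cast hmpos
      omega
    rw [hU]
    refine ⟨hmC, ?_⟩
    apply tail_lt_eps C q ε hq0 hq1 hε0 hε1' m hm1 hmC
    rw [hnq]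
    linarith
  refine ⟨?_, part2, ?_⟩
  -- Part (i)
  · have hkey := key_PS C Omax q hq0 hq1 hO1 hOC
    set S : ℝ := ((Omax:ℝ)/C)^2/q + (1-(Omax:ℝ)/C)^2/(1-q) with hSdef
    have h1q : (0:ℝ) < 1 - q := by linarith
    have hO0' : (0:ℝ) < (Omax:ℝ) := by positivity
    have hS0 : 0 < S := by
      have h1 : 0 < ((Omax:ℝ)/C)^2/q := by positivity
      have h2 : 0 ≤ (1-(Omax:ℝ)/C)^2/(1-q) := by positivity
      rw [hSdef]
      linarith
    have hBtail : ((C.choose Omax : ℝ) * q^Omax * (1-q)^(C-Omax))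
        ≤ ∑ m' ∈ Icc Omax C, (C.choose m' : ℝ) * q ^ m' * (1 - q) ^ (C - m') := by
      apply Finset.single_le_sum (f := fun m' => (C.choose m' : ℝ) * q ^ m' * (1 - q) ^ (C - m'))
      · intro k _
        positivity
      · exact Finset.mem_Icc.2 ⟨le_refl _, hOC⟩
    have hBeps : ((C.choose Omax : ℝ) * q^Omax * (1-q)^(C-Omax)) < ε := lt_of_le_of_lt hBtail hOtail
    set W : ℝ := ε * Real.sqrt (2*(C:ℝ)) with hWdef
    have hW0 : 0 < W := by positivity
    have hW1 : W < 1 := by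
      rw [hWdef]
      rw [lt_div_iff₀ hs2C] at hε1
      exact hε1
    have hSC : 1 < W * S^C := by
      have hSC0 : 0 < S^C := pow_pos hS0 C
      have hlt : Real.sqrt (2*(C:ℝ)) * ((C.choose Omax : ℝ) * q^Omax * (1-q)^(C-Omax))
          < Real.sqrt (2*(C:ℝ)) * ε := mul_lt_mul_of_pos_left hBeps hs2C
      have hstep := mul_lt_mul_of_pos_right hlt hSC0
      have heq : Real.sqrt (2*(C:ℝ)) * ε * S^C = W * S^C := by rw [hWdef]; ring
      linarith [hkey, hstep, heq]
    set K : ℝ := W ^ (-(1:ℝ)/(C:ℝ)) with hKdef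
    have hK0 : 0 < K := Real.rpow_pos_of_pos hW0 _
    have hKn : K^C = 1/W := by
      rw [hKdef, ← Real.rpow_natCast (W ^ (-(1:ℝ)/(C:ℝ))) C, ← Real.rpow_mul hW0.le,
        show (-(1:ℝ)/(C:ℝ))*(C:ℝ) = -1 by field_simp, Real.rpow_neg_one, one_div]
    have hSK : K < S := by
      by_contra hcon
      push_neg at hcon
      have hle : S^C ≤ K^C := pow_le_pow_left₀ hS0.le hcon C
      rw [hKn] at hle
      have h2' := mul_le_mul_of_nonneg_left hle hW0.le
      rw [mul_one_div, div_self hW0.ne'] at h2'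
      linarith
    have hSid : S = 1 + ((Omax:ℝ)/C - q)^2/(q*(1-q)) := by
      rw [hSdef]; field_simp; ring
    have e1 : ((Omax:ℝ)/C - q)^2 = ((Omax:ℝ) - obar)^2/(C:ℝ)^2 := by
      rw [← hnq]; field_simp
    have e2 : ((C:ℝ) - obar)*obar = (C:ℝ)^2*(q*(1-q)) := by
      rw [← hnq]; ring
    have h2 : ((C:ℝ) - obar)*obar*(K-1) < ((Omax:ℝ) - obar)^2 := by
      have h1' : K - 1 < ((Omax:ℝ)/C - q)^2/(q*(1-q)) := by
        rw [hSid] at hSK; linarith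
      rw [e1, div_div, lt_div_iff₀ (by positivity)] at h1'
      rw [e2]
      nlinarith [h1']
    have hsqlt : Real.sqrt (((C:ℝ) - obar)*obar*(K-1)) < (Omax:ℝ) - obar := by
      rw [Real.sqrt_lt' (by linarith)]
      exact h2
    rw [ge_iff_le]
    rw [hKdef, hWdef] at hsqlt
    linarith
  -- Part (iii)
  · obtain ⟨b, hbdef⟩ : ∃ b:ℝ, b = obar + Real.sqrt ((C / 2) * Real.log (1 / ε)) := ⟨_, rfl⟩
    rw [← hbdef]
    have hb0 : 0 < b := by
      have := Real.sqrt_nonneg ((C / 2) * Real.log (1 / ε))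
      rw [hbdef]
      linarith
    obtain ⟨m₀, hm₀b, hm₀b1⟩ : ∃ m₀:ℕ, b ≤ (m₀:ℝ) ∧ (m₀:ℝ) < b + 1 :=
      ⟨⌈b⌉₊, Nat.le_ceil b, Nat.ceil_lt_add_one hb0.le⟩
    rcases le_or_gt m₀ C with hm₀C | hm₀C
    · have hm₀1 : 1 ≤ m₀ := by
        have : (0:ℝ) < (m₀:ℝ) := by linarith
        have : 0 < m₀ := by exact_mod_cast this
        omega
      have hmem : m₀ ∈ U := by
        rw [hU]
        refine ⟨hm₀C, ?_⟩
        apply tail_lt_eps C q ε hq0 hq1 hε0 hε1' m₀ hm₀1 hm₀C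
        rw [hnq]
        rw [hbdef] at hm₀b
        linarith
      have := hOmin _ hmem
      have hcast : (Omax:ℝ) ≤ (m₀:ℝ) := by exact_mod_cast this
      linarith
    · have hCb : (C:ℝ) + 1 ≤ (m₀:ℝ) := by exact_mod_cast hm₀C
      have hOC' : (Omax:ℝ) ≤ C := by exact_mod_cast hOC
      linarith
end
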